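/- arXiv:1410.2482 — 4 statements merged into one kernel-verified Lean document; each statement's English description precedes it below -/
import Mathlib

section
/- Let [w], [v] ∈ X be two points of the Plücker quadric all of whose six homogeneous coordinates are nonzero (points of the main stratum). Then [w] and [v] lie in the same orbit of the (ℂ*)⁴-action if and only if w₁·w₄·v₂·v₃ = v₁·v₄·w₂·w₃, i.e. if and only if the invariants w₁w₄/(w₂w₃) and v₁v₄/(v₂v₃) coincide. Thus the orbits of the main stratum are in bijection with the values of this invariant. -/
/-- The weights of the `(ℂ*)⁴`-action on `ℂP⁵` coming from the second symmetric power: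
`t` acts on homogeneous coordinates by multiplication by
`(t₁t₂, t₁t₃, t₁t₄, t₂t₃, t₂t₄, t₃t₄)`. -/
def torusCoef (t : Fin 4 → ℂ) : Fin 6 → ℂ :=
  ![t 0 * t 1, t 0 * t 2, t 0 * t 3, t 1 * t 2, t 1 * t 3, t 2 * t 3]

/-- two points `[w], [v]` of the Plücker quadric with all six homogeneous
coordinates nonzero (points of the main stratum) lie in the same `(ℂ*)⁴`-orbit if and only
if `w₁w₄·v₂v₃ = v₁v₄·w₂w₃`, i.e. iff the invariants `w₁w₄/(w₂w₃)` and `v₁v₄/(v₂v₃)`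
coincide. (Same orbit in `ℂP⁵` means: some `t ∈ (ℂ*)⁴` carries a representative of `[w]`
to a representative of `[v]`, i.e. `v` is a nonzero scalar multiple of `t·w`.) -/
theorem main_stratum_orbits_classified_by_cross_ratio (w v : Fin 6 → ℂ)
    (hwq : w 0 * w 5 + w 2 * w 3 = w 1 * w 4)
    (hvq : v 0 * v 5 + v 2 * v 3 = v 1 * v 4)
    (hw : ∀ k, w k ≠ 0) (hv : ∀ k, v k ≠ 0) :
    (∃ t : Fin 4 → ℂ, (∀ i, t i ≠ 0) ∧
        ∃ lam : ℂ, lam ≠ 0 ∧ ∀ k : Fin 6, v k = lam * (torusCoef t k * w k)) ↔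
    w 1 * w 4 * (v 2 * v 3) = v 1 * v 4 * (w 2 * w 3) := by
  constructor
  · rintro ⟨t, ht, lam, hlam, h⟩
    have e1 : torusCoef t 1 = t 0 * t 2 := rfl
    have e2 : torusCoef t 2 = t 0 * t 3 := rfl
    have e3 : torusCoef t 3 = t 1 * t 2 := rfl
    have e4 : torusCoef t 4 = t 1 * t 3 := rfl
    have h1 := h 1; have h2 := h 2; have h3 := h 3; have h4 := h 4
    rw [e1] at h1; rw [e2] at h2; rw [e3] at h3; rw [e4] at h4
    linear_combination w 1 * w 4 * v 3 * h2 + w 1 * w 4 * (lam * (t 0 * t 3) * w 2) * h3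
      - w 2 * w 3 * v 4 * h1 - w 2 * w 3 * (lam * (t 0 * t 2) * w 1) * h4
  · intro hcr
    have hc : (v 0 * v 1 * w 3) / (w 0 * w 1 * v 3) ≠ 0 := by
      apply div_ne_zero <;>
        simp [hv 0, hv 1, hv 3, hw 0, hw 1, hw 3, mul_ne_zero]
    set c : ℂ := (v 0 * v 1 * w 3) / (w 0 * w 1 * v 3) with hcdef
    obtain ⟨s, hs2⟩ : ∃ s : ℂ, s ^ (2 : ℕ) = c :=
      ⟨c ^ ((2 : ℂ)⁻¹), Complex.cpow_nat_inv_pow c two_ne_zero⟩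
    have hs2' : s * s = c := by rw [← hs2]; ring
    have hs : s ≠ 0 := by
      intro h0; rw [h0] at hs2'; simp at hs2'; exact hc hs2'.symm
    have hsw : s * s * (w 0 * w 1 * v 3) = v 0 * v 1 * w 3 := by
      rw [hs2', hcdef, div_mul_cancel₀]
      simp [hw 0, hw 1, hv 3, mul_ne_zero]
    set T : Fin 4 → ℂ := ![s, v 0 / (w 0 * s), v 1 / (w 1 * s), v 2 / (w 2 * s)] with hT
    have T0 : T 0 = s := rfl
    have T1 : T 1 = v 0 / (w 0 * s) := rfl
    have T2 : T 2 = v 1 / (w 1 * s) := rfl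
    have T3 : T 3 = v 2 / (w 2 * s) := rfl
    refine ⟨T, ?_, 1, one_ne_zero, ?_⟩
    · intro i
      fin_cases i
      · exact hs
      · exact div_ne_zero (hv 0) (mul_ne_zero (hw 0) hs)
      · exact div_ne_zero (hv 1) (mul_ne_zero (hw 1) hs)
      · exact div_ne_zero (hv 2) (mul_ne_zero (hw 2) hs)
    · have hw0 := hw 0; have hw1 := hw 1; have hw2 := hw 2; have hw3 := hw 3
      have hv3 := hv 3
      intro k
      fin_cases k
      · show v 0 = 1 * (T 0 * T 1 * w 0)
        rw [T0, T1]; field_simp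
      · show v 1 = 1 * (T 0 * T 2 * w 1)
        rw [T0, T2]; field_simp
      · show v 2 = 1 * (T 0 * T 3 * w 2)
        rw [T0, T3]; field_simp
      · show v 3 = 1 * (T 1 * T 2 * w 3)
        rw [T1, T2]; field_simp
        linear_combination hsw
      · show v 4 = 1 * (T 1 * T 3 * w 4)
        rw [T1, T3]; field_simp
        refine mul_left_cancel₀ (mul_ne_zero hw1 hv3) ?_
        linear_combination (v 4 * w 2) * hsw - v 0 * hcr
      · show v 5 = 1 * (T 2 * T 3 * w 5)
        rw [T2, T3]; field_simp
        refine mul_left_cancel₀ (mul_ne_zero (hw 0) hv3) ?_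
        linear_combination (v 5 * w 2) * hsw
          + v 1 * ((w 2 * w 3) * hvq - (v 2 * v 3) * hwq - hcr)
end

section
/- Let [w], [v] ∈ X be points of the Plücker quadric such that {k : w_k ≠ 0} = {k : v_k ≠ 0} and this common support is a proper subset of {0,1,2,3,4,5}. Then [w] and [v] lie in the same orbit of the (ℂ*)⁴-action on X. (Equivalently: every stratum of G₄,₂ whose admissible polytope is different from the hypersimplex Δ₄,₂ consists of a single (ℂ*)⁴-orbit.) -/
private lemma pair_exists (x y x' y' μ : ℂ) (hμ : μ ≠ 0)
    (hx : x ≠ 0 ↔ x' ≠ 0) (hy : y ≠ 0 ↔ y' ≠ 0)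
    (hc : x ≠ 0 → y ≠ 0 → x' * y' = μ * (x * y)) :
    ∃ p q : ℂ, p ≠ 0 ∧ q ≠ 0 ∧ p * q = μ ∧ (x ≠ 0 → x' = p * x) ∧ (y ≠ 0 → y' = q * y) := by
  by_cases hx0 : x = 0
  · by_cases hy0 : y = 0
    · exact ⟨μ, 1, hμ, one_ne_zero, by ring, fun h => absurd hx0 h, fun h => absurd hy0 h⟩
    · have hy' : y' ≠ 0 := hy.mp hy0
      refine ⟨μ * y / y', y' / y, div_ne_zero (mul_ne_zero hμ hy0) hy',
        div_ne_zero hy' hy0, ?_, fun h => absurd hx0 h, fun _ => by field_simp⟩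
      field_simp
  · have hx' : x' ≠ 0 := hx.mp hx0
    by_cases hy0 : y = 0
    · refine ⟨x' / x, μ * x / x', div_ne_zero hx' hx0,
        div_ne_zero (mul_ne_zero hμ hx0) hx', ?_, fun _ => by field_simp,
        fun h => absurd hy0 h⟩
      field_simp
    · have hy' : y' ≠ 0 := hy.mp hy0
      refine ⟨x' / x, y' / y, div_ne_zero hx' hx0, div_ne_zero hy' hy0, ?_,
        fun _ => by field_simp, fun _ => by field_simp⟩
      have := hc hx0 hy0
      field_simp
      linear_combination this

/-- two points `[w], [v]` of the Plücker quadric with the same support of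
homogeneous coordinates, where this common support is a proper subset of `{0,…,5}`,
lie in the same `(ℂ*)⁴`-orbit. (Same orbit in `ℂP⁵` means: some `t ∈ (ℂ*)⁴` carries a
representative of `[w]` to a representative of `[v]`.) -/
theorem degenerate_strata_are_single_orbits (w v : Fin 6 → ℂ)
    (hw : w ≠ 0) (hv : v ≠ 0)
    (hwq : w 0 * w 5 + w 2 * w 3 = w 1 * w 4)
    (hvq : v 0 * v 5 + v 2 * v 3 = v 1 * v 4)
    (hsupp : ∀ k, w k ≠ 0 ↔ v k ≠ 0)
    (hproper : ∃ k, w k = 0) :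
    ∃ t : Fin 4 → ℂ, (∀ i, t i ≠ 0) ∧
      ∃ lam : ℂ, lam ≠ 0 ∧ ∀ k : Fin 6, v k = lam * (torusCoef t k * w k) := by
  have hz : ∀ k, w k = 0 → v k = 0 := by
    intro k h
    by_contra h'
    exact ((hsupp k).mpr h') h
  have hnot : (w 0 = 0 ∨ w 5 = 0) ∨ (w 2 = 0 ∨ w 3 = 0) ∨ (w 1 = 0 ∨ w 4 = 0) := by
    obtain ⟨k, hk⟩ := hproper
    fin_cases k <;> tauto
  obtain ⟨μ, hμ, hμ1, hμ2, hμ3⟩ :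
      ∃ μ : ℂ, μ ≠ 0 ∧
        (w 0 ≠ 0 → w 5 ≠ 0 → v 0 * v 5 = μ * (w 0 * w 5)) ∧
        (w 2 ≠ 0 → w 3 ≠ 0 → v 2 * v 3 = μ * (w 2 * w 3)) ∧
        (w 1 ≠ 0 → w 4 ≠ 0 → v 1 * v 4 = μ * (w 1 * w 4)) := by
    by_cases hA : w 0 ≠ 0 ∧ w 5 ≠ 0
    · obtain ⟨h0, h5⟩ := hA
      have hv0 : v 0 ≠ 0 := (hsupp 0).mp h0
      have hv5 : v 5 ≠ 0 := (hsupp 5).mp h5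
      have hne : w 0 * w 5 ≠ 0 := mul_ne_zero h0 h5
      refine ⟨v 0 * v 5 / (w 0 * w 5),
        div_ne_zero (mul_ne_zero hv0 hv5) hne,
        fun _ _ => (div_mul_cancel₀ _ hne).symm, ?_, ?_⟩
      · intro h2 h3
        have hC : w 1 = 0 ∨ w 4 = 0 := by tauto
        have hwC : w 1 * w 4 = 0 := by rcases hC with h | h <;> simp [h]
        have hvC : v 1 * v 4 = 0 := by rcases hC with h | h <;> simp [hz _ h]
        rw [hwC] at hwq; rw [hvC] at hvq
        rw [div_mul_eq_mul_div, eq_div_iff hne]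
        linear_combination (w 0 * w 5) * hvq - (v 0 * v 5) * hwq
      · intro h1 h4
        have hB : w 2 = 0 ∨ w 3 = 0 := by tauto
        have hwB : w 2 * w 3 = 0 := by rcases hB with h | h <;> simp [h]
        have hvB : v 2 * v 3 = 0 := by rcases hB with h | h <;> simp [hz _ h]
        rw [hwB] at hwq; rw [hvB] at hvq
        rw [div_mul_eq_mul_div, eq_div_iff hne]
        linear_combination (v 0 * v 5) * hwq - (w 0 * w 5) * hvq
    · have hwA : w 0 * w 5 = 0 := by
        rcases not_and_or.mp hA with h | h
        · rw [not_not.mp h, zero_mul]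
        · rw [not_not.mp h, mul_zero]
      have hvA : v 0 * v 5 = 0 := by
        rcases not_and_or.mp hA with h | h
        · rw [hz 0 (not_not.mp h), zero_mul]
        · rw [hz 5 (not_not.mp h), mul_zero]
      rw [hwA, zero_add] at hwq; rw [hvA, zero_add] at hvq
      by_cases hB : w 2 ≠ 0 ∧ w 3 ≠ 0
      · obtain ⟨h2, h3⟩ := hB
        have hv2 : v 2 ≠ 0 := (hsupp 2).mp h2
        have hv3 : v 3 ≠ 0 := (hsupp 3).mp h3
        have hne : w 2 * w 3 ≠ 0 := mul_ne_zero h2 h3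
        refine ⟨v 2 * v 3 / (w 2 * w 3),
          div_ne_zero (mul_ne_zero hv2 hv3) hne,
          fun h0 h5 => absurd ⟨h0, h5⟩ hA,
          fun _ _ => (div_mul_cancel₀ _ hne).symm, ?_⟩
        intro h1 h4
        rw [div_mul_eq_mul_div, eq_div_iff hne]
        linear_combination (v 1 * v 4) * hwq - (w 1 * w 4) * hvq
      · by_cases hC : w 1 ≠ 0 ∧ w 4 ≠ 0
        · obtain ⟨h1, h4⟩ := hC
          have hv1 : v 1 ≠ 0 := (hsupp 1).mp h1
          have hv4 : v 4 ≠ 0 := (hsupp 4).mp h4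
          have hne : w 1 * w 4 ≠ 0 := mul_ne_zero h1 h4
          exact ⟨v 1 * v 4 / (w 1 * w 4),
            div_ne_zero (mul_ne_zero hv1 hv4) hne,
            fun h0 h5 => absurd ⟨h0, h5⟩ hA,
            fun h2 h3 => absurd ⟨h2, h3⟩ hB,
            fun _ _ => (div_mul_cancel₀ _ hne).symm⟩
        · exact ⟨1, one_ne_zero, fun h0 h5 => absurd ⟨h0, h5⟩ hA,
            fun h2 h3 => absurd ⟨h2, h3⟩ hB, fun h1 h4 => absurd ⟨h1, h4⟩ hC⟩
  obtain ⟨s0, s5, hs0, hs5, hm05, he0, he5⟩ :=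
    pair_exists (w 0) (w 5) (v 0) (v 5) μ hμ (hsupp 0) (hsupp 5) hμ1
  obtain ⟨s2, s3, hs2, hs3, hm23, he2, he3⟩ :=
    pair_exists (w 2) (w 3) (v 2) (v 3) μ hμ (hsupp 2) (hsupp 3) hμ2
  obtain ⟨s1, s4, hs1, hs4, hm14, he1, he4⟩ :=
    pair_exists (w 1) (w 4) (v 1) (v 4) μ hμ (hsupp 1) (hsupp 4) hμ3
  refine ⟨![1, s3 / s1, s3 / s0, s2 * s3 / (s0 * s1)], ?_, s0 * s1 / s3, ?_, ?_⟩
  · intro i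
    fin_cases i
    · exact one_ne_zero
    · exact div_ne_zero hs3 hs1
    · exact div_ne_zero hs3 hs0
    · exact div_ne_zero (mul_ne_zero hs2 hs3) (mul_ne_zero hs0 hs1)
  · exact div_ne_zero (mul_ne_zero hs0 hs1) hs3
  · intro k
    have step : ∀ (x x' p : ℂ), (x ≠ 0 → x' = p * x) → (x = 0 → x' = 0) →
        ∀ lam c : ℂ, lam * c = p → x' = lam * (c * x) := by
      intro x x' p h1 h2 lam c hlc
      by_cases hx : x = 0
      · simp [hx, h2 hx]
      · rw [← mul_assoc, hlc]; exact h1 hx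
    have e14 : s1 * s4 = s2 * s3 := hm14.trans hm23.symm
    have e05 : s0 * s5 = s2 * s3 := hm05.trans hm23.symm
    fin_cases k
    · exact step _ _ _ he0 (hz 0) _ _ (by
        simp [torusCoef, Matrix.cons_val_succ]; field_simp)
    · exact step _ _ _ he1 (hz 1) _ _ (by
        simp [torusCoef, Matrix.cons_val_succ]; field_simp)
    · exact step _ _ _ he2 (hz 2) _ _ (by
        simp [torusCoef, Matrix.cons_val_succ]; field_simp)
    · exact step _ _ _ he3 (hz 3) _ _ (by
        simp [torusCoef, Matrix.cons_val_succ]; field_simp)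
    · exact step _ _ _ he4 (hz 4) _ _ (by
        simp [torusCoef, Matrix.cons_val_succ]; field_simp
        linear_combination (-1 : ℂ) * e14)
    · refine step _ _ _ he5 (hz 5) _ _ ?_
      show s0 * s1 / s3 * (s3 / s0 * (s2 * s3 / (s0 * s1))) = s5
      field_simp
      linear_combination (-1 : ℂ) * e05
end

section
/- The orbit space X/T⁴ of the canonical T⁴-action on the Grassmannian G₄,₂ (realized as the Plücker quadric X) is homotopy equivalent to the 5-sphere S⁵ (the unit sphere of ℝ⁶): there exist continuous maps f : X/T⁴ → S⁵ and g : S⁵ → X/T⁴ with g∘f and f∘g homotopic to the respective identities. -/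
/-- Proportionality of nonzero vectors of `ℂ⁶`: the relation defining `ℂP⁵`. -/
def projRel (x y : {w : Fin 6 → ℂ // w ≠ 0}) : Prop :=
  ∃ c : ℂ, c ≠ 0 ∧ (fun k => c * x.1 k) = y.1

/-- `ℂP⁵`, with the quotient topology. -/
abbrev CP5 := Quot projRel

/-- The Plücker quadric `X = {[w] ∈ ℂP⁵ : w₀w₅ + w₂w₃ = w₁w₄}`, i.e. the Grassmannian
`G₄,₂` under the Plücker embedding, with the subspace topology. -/
def pluckerQuadric : Set CP5 :=
  {p | ∃ w : {w : Fin 6 → ℂ // w ≠ 0}, Quot.mk projRel w = p ∧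
        w.1 0 * w.1 5 + w.1 2 * w.1 3 = w.1 1 * w.1 4}

/-- Two points of `X` lie in the same orbit of the compact torus
`T⁴ = {t ∈ ℂ⁴ : |tᵢ| = 1}`. -/
def orbitRel (p q : ↥pluckerQuadric) : Prop :=
  ∃ t : Fin 4 → ℂ, (∀ i, ‖t i‖ = 1) ∧
    ∃ w w' : {w : Fin 6 → ℂ // w ≠ 0},
      Quot.mk projRel w = p.1 ∧ Quot.mk projRel w' = q.1 ∧
      ∀ k : Fin 6, w'.1 k = torusCoef t k * w.1 k

noncomputable section

namespace OrbitSphere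

open Complex

/-- sum of squared moduli -/
def nsum (w : Fin 6 → ℂ) : ℝ :=
  normSq (w 0) + normSq (w 1) + normSq (w 2) + normSq (w 3) + normSq (w 4) + normSq (w 5)

/-- The quadric condition. -/
def Qu (w : Fin 6 → ℂ) : Prop := w 0 * w 5 + w 2 * w 3 = w 1 * w 4

def Dd1 (w : Fin 6 → ℂ) : ℂ := w 0 * w 5
def Dd2 (w : Fin 6 → ℂ) : ℂ := w 2 * w 3
def cc (w : Fin 6 → ℂ) : ℂ := Dd1 w * (starRingEnd ℂ) (Dd2 w)

def rawPhi (w : Fin 6 → ℂ) : Fin 6 → ℝ :=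
  ![(normSq (w 0) - normSq (w 5)) / nsum w,
    (normSq (w 2) - normSq (w 3)) / nsum w,
    (normSq (w 1) - normSq (w 4)) / nsum w,
    (normSq (Dd1 w) - normSq (Dd2 w)) / (nsum w) ^ 2,
    (2 * (cc w).re) / (nsum w) ^ 2,
    (2 * (cc w).im) / (nsum w) ^ 2]

def phi (w : Fin 6 → ℂ) : EuclideanSpace ℝ (Fin 6) :=
  (WithLp.equiv 2 (Fin 6 → ℝ)).symm (rawPhi w)

/-- norm of the `b`-part -/
def nb (x : EuclideanSpace ℝ (Fin 6)) : ℝ := Real.sqrt ((x 3) ^ 2 + (x 4) ^ 2 + (x 5) ^ 2)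

/-- the radial normalization function -/
def G (x : EuclideanSpace ℝ (Fin 6)) : ℝ :=
  Real.sqrt ((x 0) ^ 2 + (2 * nb x + 2 * x 3)) +
    Real.sqrt ((x 1) ^ 2 + (2 * nb x - 2 * x 3)) +
    Real.sqrt ((x 2) ^ 2 + (4 * nb x + 4 * x 4))

lemma nsum_nonneg (w : Fin 6 → ℂ) : 0 ≤ nsum w := by
  unfold nsum
  have h0 := normSq_nonneg (w 0); have h1 := normSq_nonneg (w 1)
  have h2 := normSq_nonneg (w 2); have h3 := normSq_nonneg (w 3)
  have h4 := normSq_nonneg (w 4); have h5 := normSq_nonneg (w 5)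
  linarith

lemma nsum_eq_zero {w : Fin 6 → ℂ} (h : nsum w = 0) : w = 0 := by
  have h0 := normSq_nonneg (w 0); have h1 := normSq_nonneg (w 1)
  have h2 := normSq_nonneg (w 2); have h3 := normSq_nonneg (w 3)
  have h4 := normSq_nonneg (w 4); have h5 := normSq_nonneg (w 5)
  unfold nsum at h
  funext k
  rw [Pi.zero_apply, ← normSq_eq_zero]
  fin_cases k <;>
    simp only [Fin.zero_eta, Fin.mk_one, Fin.reduceFinMk, Fin.isValue] <;> linarith

lemma nsum_pos {w : Fin 6 → ℂ} (hw : w ≠ 0) : 0 < nsum w := by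
  rcases (nsum_nonneg w).lt_or_eq with h | h
  · exact h
  · exact absurd (nsum_eq_zero h.symm) hw

lemma phi_apply (w : Fin 6 → ℂ) (i : Fin 6) : phi w i = rawPhi w i := rfl

lemma normSq_cc (w : Fin 6 → ℂ) :
    (cc w).re ^ 2 + (cc w).im ^ 2 = normSq (Dd1 w) * normSq (Dd2 w) := by
  have h : normSq (cc w) = normSq (Dd1 w) * normSq (Dd2 w) := by
    rw [cc, Complex.normSq_mul, Complex.normSq_conj]
  rw [← h, Complex.normSq_apply]; ring

lemma phi0 {w : Fin 6 → ℂ} (hn : nsum w = 1) :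
    phi w 0 = normSq (w 0) - normSq (w 5) := by
  show (normSq (w 0) - normSq (w 5)) / nsum w = _
  rw [hn, div_one]

lemma phi1 {w : Fin 6 → ℂ} (hn : nsum w = 1) :
    phi w 1 = normSq (w 2) - normSq (w 3) := by
  show (normSq (w 2) - normSq (w 3)) / nsum w = _
  rw [hn, div_one]

lemma phi2 {w : Fin 6 → ℂ} (hn : nsum w = 1) :
    phi w 2 = normSq (w 1) - normSq (w 4) := by
  show (normSq (w 1) - normSq (w 4)) / nsum w = _
  rw [hn, div_one]

lemma phi3 {w : Fin 6 → ℂ} (hn : nsum w = 1) :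
    phi w 3 = normSq (Dd1 w) - normSq (Dd2 w) := by
  show (normSq (Dd1 w) - normSq (Dd2 w)) / (nsum w) ^ 2 = _
  rw [hn]; norm_num

lemma phi4 {w : Fin 6 → ℂ} (hn : nsum w = 1) : phi w 4 = 2 * (cc w).re := by
  show (2 * (cc w).re) / (nsum w) ^ 2 = _
  rw [hn]; norm_num

lemma phi5 {w : Fin 6 → ℂ} (hn : nsum w = 1) : phi w 5 = 2 * (cc w).im := by
  show (2 * (cc w).im) / (nsum w) ^ 2 = _
  rw [hn]; norm_num

lemma nb_phi {w : Fin 6 → ℂ} (hn : nsum w = 1) :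
    nb (phi w) = normSq (Dd1 w) + normSq (Dd2 w) := by
  rw [nb, phi3 hn, phi4 hn, phi5 hn]
  rw [show (normSq (Dd1 w) - normSq (Dd2 w)) ^ 2 + (2 * (cc w).re) ^ 2 +
      (2 * (cc w).im) ^ 2 = (normSq (Dd1 w) + normSq (Dd2 w)) ^ 2 from by
    linear_combination 4 * normSq_cc w]
  exact Real.sqrt_sq (add_nonneg (normSq_nonneg _) (normSq_nonneg _))

lemma G_phi {w : Fin 6 → ℂ} (hq : Qu w) (hn : nsum w = 1) : G (phi w) = 1 := by
  have hP : normSq (Dd1 w) = normSq (w 0) * normSq (w 5) := by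
    rw [Dd1, Complex.normSq_mul]
  have hQ : normSq (Dd2 w) = normSq (w 2) * normSq (w 3) := by
    rw [Dd2, Complex.normSq_mul]
  have hq' : Dd1 w + Dd2 w = w 1 * w 4 := hq
  have h14 : normSq (Dd1 w) + normSq (Dd2 w) + 2 * (cc w).re
      = normSq (w 1) * normSq (w 4) := by
    rw [show normSq (Dd1 w) + normSq (Dd2 w) + 2 * (cc w).re
        = normSq (Dd1 w + Dd2 w) from (normSq_add _ _).symm, hq', Complex.normSq_mul]
  rw [G, nb_phi hn, phi0 hn, phi1 hn, phi2 hn, phi3 hn, phi4 hn]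
  rw [show (normSq (w 0) - normSq (w 5)) ^ 2 +
      (2 * (normSq (Dd1 w) + normSq (Dd2 w)) + 2 * (normSq (Dd1 w) - normSq (Dd2 w)))
      = (normSq (w 0) + normSq (w 5)) ^ 2 from by rw [hP]; ring]
  rw [show (normSq (w 2) - normSq (w 3)) ^ 2 +
      (2 * (normSq (Dd1 w) + normSq (Dd2 w)) - 2 * (normSq (Dd1 w) - normSq (Dd2 w)))
      = (normSq (w 2) + normSq (w 3)) ^ 2 from by rw [hQ]; ring]
  rw [show (normSq (w 1) - normSq (w 4)) ^ 2 +
      (4 * (normSq (Dd1 w) + normSq (Dd2 w)) + 4 * (2 * (cc w).re))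
      = (normSq (w 1) + normSq (w 4)) ^ 2 from by linear_combination 4 * h14]
  rw [Real.sqrt_sq (add_nonneg (normSq_nonneg _) (normSq_nonneg _)),
    Real.sqrt_sq (add_nonneg (normSq_nonneg _) (normSq_nonneg _)),
    Real.sqrt_sq (add_nonneg (normSq_nonneg _) (normSq_nonneg _))]
  unfold nsum at hn; linarith

lemma phi_smul {w : Fin 6 → ℂ} {c : ℂ} (hc : c ≠ 0) :
    phi (fun k => c * w k) = phi w := by
  have hnc : normSq c ≠ 0 := fun h => hc (normSq_eq_zero.mp h)
  have hnc2 : (normSq c) ^ 2 ≠ 0 := pow_ne_zero _ hnc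
  have hns : nsum (fun k => c * w k) = normSq c * nsum w := by
    unfold nsum
    simp only [Complex.normSq_mul]; ring
  have hD1 : Dd1 (fun k => c * w k) = c ^ 2 * Dd1 w := by
    unfold Dd1; show (c * w 0) * (c * w 5) = _; ring
  have hD2 : Dd2 (fun k => c * w k) = c ^ 2 * Dd2 w := by
    unfold Dd2; show (c * w 2) * (c * w 3) = _; ring
  have hcc : cc (fun k => c * w k) = ((normSq c ^ 2 : ℝ) : ℂ) * cc w := by
    unfold cc
    rw [hD1, hD2, map_mul,
      show c ^ 2 * Dd1 w * ((starRingEnd ℂ) (c ^ 2) * (starRingEnd ℂ) (Dd2 w))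
        = (c ^ 2 * (starRingEnd ℂ) (c ^ 2)) * (Dd1 w * (starRingEnd ℂ) (Dd2 w)) from by
        ring,
      Complex.mul_conj, map_pow]
  have hraw : rawPhi (fun k => c * w k) = rawPhi w := by
    funext i
    fin_cases i
    · show (normSq (c * w 0) - normSq (c * w 5)) / nsum (fun k => c * w k)
        = (normSq (w 0) - normSq (w 5)) / nsum w
      rw [hns, Complex.normSq_mul, Complex.normSq_mul, ← mul_sub,
        mul_div_mul_left _ _ hnc]
    · show (normSq (c * w 2) - normSq (c * w 3)) / nsum (fun k => c * w k)
        = (normSq (w 2) - normSq (w 3)) / nsum w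
      rw [hns, Complex.normSq_mul, Complex.normSq_mul, ← mul_sub,
        mul_div_mul_left _ _ hnc]
    · show (normSq (c * w 1) - normSq (c * w 4)) / nsum (fun k => c * w k)
        = (normSq (w 1) - normSq (w 4)) / nsum w
      rw [hns, Complex.normSq_mul, Complex.normSq_mul, ← mul_sub,
        mul_div_mul_left _ _ hnc]
    · show (normSq (Dd1 (fun k => c * w k)) - normSq (Dd2 (fun k => c * w k)))
          / (nsum (fun k => c * w k)) ^ 2
        = (normSq (Dd1 w) - normSq (Dd2 w)) / (nsum w) ^ 2
      rw [hD1, hD2, hns, Complex.normSq_mul, Complex.normSq_mul, map_pow, mul_pow,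
        ← mul_sub, mul_div_mul_left _ _ hnc2]
    · show (2 * (cc (fun k => c * w k)).re) / (nsum (fun k => c * w k)) ^ 2
        = (2 * (cc w).re) / (nsum w) ^ 2
      rw [hcc, hns, mul_pow]
      rw [show (((normSq c ^ 2 : ℝ) : ℂ) * cc w).re = normSq c ^ 2 * (cc w).re from by
        rw [Complex.mul_re, Complex.ofReal_re, Complex.ofReal_im]; ring]
      rw [show 2 * (normSq c ^ 2 * (cc w).re) = normSq c ^ 2 * (2 * (cc w).re) from by
        ring, mul_div_mul_left _ _ hnc2]
    · show (2 * (cc (fun k => c * w k)).im) / (nsum (fun k => c * w k)) ^ 2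
        = (2 * (cc w).im) / (nsum w) ^ 2
      rw [hcc, hns, mul_pow]
      rw [show (((normSq c ^ 2 : ℝ) : ℂ) * cc w).im = normSq c ^ 2 * (cc w).im from by
        rw [Complex.mul_im, Complex.ofReal_re, Complex.ofReal_im]; ring]
      rw [show 2 * (normSq c ^ 2 * (cc w).im) = normSq c ^ 2 * (2 * (cc w).im) from by
        ring, mul_div_mul_left _ _ hnc2]
  unfold phi; rw [hraw]

lemma phi_torus {w : Fin 6 → ℂ} {t : Fin 4 → ℂ} (ht : ∀ i, ‖t i‖ = 1) :
    phi (fun k => torusCoef t k * w k) = phi w := by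
  have hnt : ∀ i, normSq (t i) = 1 := fun i => by
    rw [Complex.normSq_eq_norm_sq, ht i]; norm_num
  have hδ : normSq (t 0 * t 1 * t 2 * t 3) = 1 := by
    simp only [Complex.normSq_mul, hnt]; norm_num
  have tc0 : torusCoef t 0 = t 0 * t 1 := rfl
  have tc1 : torusCoef t 1 = t 0 * t 2 := rfl
  have tc2 : torusCoef t 2 = t 0 * t 3 := rfl
  have tc3 : torusCoef t 3 = t 1 * t 2 := rfl
  have tc4 : torusCoef t 4 = t 1 * t 3 := rfl
  have tc5 : torusCoef t 5 = t 2 * t 3 := rfl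
  have hns : nsum (fun k => torusCoef t k * w k) = nsum w := by
    unfold nsum
    simp only [tc0, tc1, tc2, tc3, tc4, tc5, Complex.normSq_mul, hnt]
    ring
  have hD1 : Dd1 (fun k => torusCoef t k * w k) = (t 0 * t 1 * t 2 * t 3) * Dd1 w := by
    unfold Dd1
    simp only [tc0, tc5]
    ring
  have hD2 : Dd2 (fun k => torusCoef t k * w k) = (t 0 * t 1 * t 2 * t 3) * Dd2 w := by
    unfold Dd2
    simp only [tc2, tc3]
    ring
  have hcc : cc (fun k => torusCoef t k * w k) = cc w := by
    unfold cc
    rw [hD1, hD2, map_mul,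
      show (t 0 * t 1 * t 2 * t 3) * Dd1 w *
          ((starRingEnd ℂ) (t 0 * t 1 * t 2 * t 3) * (starRingEnd ℂ) (Dd2 w))
        = ((t 0 * t 1 * t 2 * t 3) * (starRingEnd ℂ) (t 0 * t 1 * t 2 * t 3)) *
          (Dd1 w * (starRingEnd ℂ) (Dd2 w)) from by ring,
      Complex.mul_conj, hδ]
    simp
  have hnD1 : normSq (Dd1 (fun k => torusCoef t k * w k)) = normSq (Dd1 w) := by
    rw [hD1, Complex.normSq_mul, hδ, one_mul]
  have hnD2 : normSq (Dd2 (fun k => torusCoef t k * w k)) = normSq (Dd2 w) := by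
    rw [hD2, Complex.normSq_mul, hδ, one_mul]
  have hraw : rawPhi (fun k => torusCoef t k * w k) = rawPhi w := by
    funext i
    fin_cases i
    · show (normSq (torusCoef t 0 * w 0) - normSq (torusCoef t 5 * w 5))
          / nsum (fun k => torusCoef t k * w k)
        = (normSq (w 0) - normSq (w 5)) / nsum w
      rw [tc0, tc5, hns]
      simp only [Complex.normSq_mul, hnt, one_mul]
    · show (normSq (torusCoef t 2 * w 2) - normSq (torusCoef t 3 * w 3))
          / nsum (fun k => torusCoef t k * w k)
        = (normSq (w 2) - normSq (w 3)) / nsum w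
      rw [tc2, tc3, hns]
      simp only [Complex.normSq_mul, hnt, one_mul]
    · show (normSq (torusCoef t 1 * w 1) - normSq (torusCoef t 4 * w 4))
          / nsum (fun k => torusCoef t k * w k)
        = (normSq (w 1) - normSq (w 4)) / nsum w
      rw [tc1, tc4, hns]
      simp only [Complex.normSq_mul, hnt, one_mul]
    · show (normSq (Dd1 (fun k => torusCoef t k * w k))
          - normSq (Dd2 (fun k => torusCoef t k * w k)))
          / (nsum (fun k => torusCoef t k * w k)) ^ 2
        = (normSq (Dd1 w) - normSq (Dd2 w)) / (nsum w) ^ 2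
      rw [hns, hnD1, hnD2]
    · show (2 * (cc (fun k => torusCoef t k * w k)).re)
          / (nsum (fun k => torusCoef t k * w k)) ^ 2
        = (2 * (cc w).re) / (nsum w) ^ 2
      rw [hns, hcc]
    · show (2 * (cc (fun k => torusCoef t k * w k)).im)
          / (nsum (fun k => torusCoef t k * w k)) ^ 2
        = (2 * (cc w).im) / (nsum w) ^ 2
      rw [hns, hcc]
  unfold phi; rw [hraw]

lemma phi_ne_zero {w : Fin 6 → ℂ} (hq : Qu w) (hn : nsum w = 1) : phi w ≠ 0 := by
  intro h
  have hcomp : ∀ i : Fin 6, phi w i = 0 := fun i => by rw [h]; rfl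
  have h0 : normSq (w 0) - normSq (w 5) = 0 := by rw [← phi0 hn]; exact hcomp 0
  have h1 : normSq (w 2) - normSq (w 3) = 0 := by rw [← phi1 hn]; exact hcomp 1
  have h2 : normSq (w 1) - normSq (w 4) = 0 := by rw [← phi2 hn]; exact hcomp 2
  have h3 : normSq (Dd1 w) - normSq (Dd2 w) = 0 := by rw [← phi3 hn]; exact hcomp 3
  have h4 : 2 * (cc w).re = 0 := by rw [← phi4 hn]; exact hcomp 4
  have h5 : 2 * (cc w).im = 0 := by rw [← phi5 hn]; exact hcomp 5
  have hPQ : normSq (Dd1 w) * normSq (Dd2 w) = 0 := by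
    have := normSq_cc w; nlinarith
  have hP : normSq (Dd1 w) = 0 := by
    nlinarith [normSq_nonneg (Dd1 w), normSq_nonneg (Dd2 w)]
  have hQ : normSq (Dd2 w) = 0 := by
    nlinarith [normSq_nonneg (Dd1 w), normSq_nonneg (Dd2 w)]
  have hP' : normSq (w 0) * normSq (w 5) = 0 := by
    rw [← Complex.normSq_mul]; exact hP
  have hQ' : normSq (w 2) * normSq (w 3) = 0 := by
    rw [← Complex.normSq_mul]; exact hQ
  have h14 : normSq (w 1) * normSq (w 4) = 0 := by
    have hq' : Dd1 w + Dd2 w = w 1 * w 4 := hq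
    have h4' : 2 * (Dd1 w * (starRingEnd ℂ) (Dd2 w)).re = 0 := h4
    rw [← Complex.normSq_mul, ← hq', normSq_add]
    linarith
  have h0' : normSq (w 0) = normSq (w 5) := by linarith
  have h1' : normSq (w 2) = normSq (w 3) := by linarith
  have h2' : normSq (w 1) = normSq (w 4) := by linarith
  rw [← h0'] at hP'; rw [← h1'] at hQ'; rw [← h2'] at h14
  have e0 : normSq (w 0) = 0 := mul_self_eq_zero.mp hP'
  have e5 : normSq (w 5) = 0 := by rw [← h0']; exact e0
  have e2 : normSq (w 2) = 0 := mul_self_eq_zero.mp hQ'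
  have e3 : normSq (w 3) = 0 := by rw [← h1']; exact e2
  have e1 : normSq (w 1) = 0 := mul_self_eq_zero.mp h14
  have e4 : normSq (w 4) = 0 := by rw [← h2']; exact e1
  unfold nsum at hn
  rw [e0, e1, e2, e3, e4, e5] at hn
  norm_num at hn

lemma nb_abs3 (x : EuclideanSpace ℝ (Fin 6)) : |x 3| ≤ nb x := by
  unfold nb
  exact Real.abs_le_sqrt (by nlinarith [sq_nonneg (x 4), sq_nonneg (x 5)])

lemma nb_abs4 (x : EuclideanSpace ℝ (Fin 6)) : |x 4| ≤ nb x := by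
  unfold nb
  exact Real.abs_le_sqrt (by nlinarith [sq_nonneg (x 3), sq_nonneg (x 5)])

lemma c1_nonneg (x : EuclideanSpace ℝ (Fin 6)) : 0 ≤ 2 * nb x + 2 * x 3 := by
  have := (abs_le.mp (nb_abs3 x)).1; linarith

lemma c2_nonneg (x : EuclideanSpace ℝ (Fin 6)) : 0 ≤ 2 * nb x - 2 * x 3 := by
  have := (abs_le.mp (nb_abs3 x)).2; linarith

lemma c3_nonneg (x : EuclideanSpace ℝ (Fin 6)) : 0 ≤ 4 * nb x + 4 * x 4 := by
  have := (abs_le.mp (nb_abs4 x)).1; linarith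

lemma nb_smul (x : EuclideanSpace ℝ (Fin 6)) {s : ℝ} (hs : 0 ≤ s) :
    nb (s • x) = s * nb x := by
  unfold nb
  simp only [PiLp.smul_apply, smul_eq_mul]
  rw [show (s * x 3) ^ 2 + (s * x 4) ^ 2 + (s * x 5) ^ 2
      = s ^ 2 * ((x 3) ^ 2 + (x 4) ^ 2 + (x 5) ^ 2) from by ring,
    Real.sqrt_mul (sq_nonneg s), Real.sqrt_sq hs]

lemma G_smul_eq (x : EuclideanSpace ℝ (Fin 6)) {s : ℝ} (hs : 0 ≤ s) :
    G (s • x) = Real.sqrt (s ^ 2 * (x 0) ^ 2 + s * (2 * nb x + 2 * x 3)) +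
      Real.sqrt (s ^ 2 * (x 1) ^ 2 + s * (2 * nb x - 2 * x 3)) +
      Real.sqrt (s ^ 2 * (x 2) ^ 2 + s * (4 * nb x + 4 * x 4)) := by
  unfold G
  rw [nb_smul x hs]
  simp only [PiLp.smul_apply, smul_eq_mul]
  rw [show (s * x 0) ^ 2 + (2 * (s * nb x) + 2 * (s * x 3))
      = s ^ 2 * (x 0) ^ 2 + s * (2 * nb x + 2 * x 3) from by ring,
    show (s * x 1) ^ 2 + (2 * (s * nb x) - 2 * (s * x 3))
      = s ^ 2 * (x 1) ^ 2 + s * (2 * nb x - 2 * x 3) from by ring,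
    show (s * x 2) ^ 2 + (4 * (s * nb x) + 4 * (s * x 4))
      = s ^ 2 * (x 2) ^ 2 + s * (4 * nb x + 4 * x 4) from by ring]

lemma eucl_eq_zero {x : EuclideanSpace ℝ (Fin 6)} (h : ∀ i, x i = 0) : x = 0 := by
  ext i
  exact h i

lemma sq_zero_of_sum {a b c : ℝ} (h : a ^ 2 + b ^ 2 + c ^ 2 = 0) :
    a = 0 ∧ b = 0 ∧ c = 0 := by
  refine ⟨?_, ?_, ?_⟩ <;>
    [ (apply pow_eq_zero_iff (n := 2) (by norm_num) |>.mp;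
        exact le_antisymm (by nlinarith [sq_nonneg b, sq_nonneg c]) (sq_nonneg a));
      (apply pow_eq_zero_iff (n := 2) (by norm_num) |>.mp;
        exact le_antisymm (by nlinarith [sq_nonneg a, sq_nonneg c]) (sq_nonneg b));
      (apply pow_eq_zero_iff (n := 2) (by norm_num) |>.mp;
        exact le_antisymm (by nlinarith [sq_nonneg a, sq_nonneg b]) (sq_nonneg c))]

lemma G_smul_lt {x : EuclideanSpace ℝ (Fin 6)} (hx : x ≠ 0) {s : ℝ}
    (h0 : 0 ≤ s) (h1 : s < 1) : G (s • x) < G x := by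
  have hs2 : s ^ 2 ≤ 1 := by nlinarith
  have hc1 := c1_nonneg x
  have hc2 := c2_nonneg x
  have hc3 := c3_nonneg x
  set c1 := 2 * nb x + 2 * x 3 with hc1d
  set c2 := 2 * nb x - 2 * x 3 with hc2d
  set c3 := 4 * nb x + 4 * x 4 with hc3d
  have hle : ∀ a c : ℝ, 0 ≤ c →
      Real.sqrt (s ^ 2 * a ^ 2 + s * c) ≤ Real.sqrt (a ^ 2 + c) := by
    intro a c hc
    apply Real.sqrt_le_sqrt
    nlinarith [sq_nonneg a]
  have hlt : ∀ a c : ℝ, 0 ≤ c → (a ≠ 0 ∨ 0 < c) →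
      Real.sqrt (s ^ 2 * a ^ 2 + s * c) < Real.sqrt (a ^ 2 + c) := by
    intro a c hc hor
    apply Real.sqrt_lt_sqrt (by positivity)
    rcases hor with ha | hcpos
    · have e1 : s ^ 2 * a ^ 2 < a ^ 2 := by
        have ha2 : 0 < a ^ 2 := by positivity
        have hs2' : s ^ 2 < 1 := by nlinarith
        have := mul_lt_mul_of_pos_right hs2' ha2
        linarith
      have e2 : s * c ≤ c := by nlinarith
      linarith
    · have e1 : s ^ 2 * a ^ 2 ≤ a ^ 2 := by nlinarith [sq_nonneg a]
      have e2 : s * c < c := by nlinarith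
      linarith
  rw [G_smul_eq x h0]
  unfold G
  rw [← hc1d, ← hc2d, ← hc3d]
  have key : x 0 ≠ 0 ∨ x 1 ≠ 0 ∨ x 2 ≠ 0 ∨ 0 < c1 ∨ 0 < c2 ∨ 0 < c3 := by
    by_contra hcon
    push_neg at hcon
    obtain ⟨e0, e1, e2, f1, f2, f3⟩ := hcon
    have hb1 : c1 = 0 := le_antisymm f1 hc1
    have hb2 : c2 = 0 := le_antisymm f2 hc2
    have hnb : nb x = 0 := by rw [hc1d] at hb1; rw [hc2d] at hb2; linarith
    have hsum : (x 3) ^ 2 + (x 4) ^ 2 + (x 5) ^ 2 = 0 :=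
      le_antisymm (Real.sqrt_eq_zero'.mp hnb) (by positivity)
    apply hx
    apply eucl_eq_zero
    intro i
    fin_cases i
    · exact e0
    · exact e1
    · exact e2
    · exact (sq_zero_of_sum hsum).1
    · exact (sq_zero_of_sum hsum).2.1
    · exact (sq_zero_of_sum hsum).2.2
  have l1 := hle (x 0) c1 hc1
  have l2 := hle (x 1) c2 hc2
  have l3 := hle (x 2) c3 hc3
  rcases key with h | h | h | h | h | h
  · have := hlt (x 0) c1 hc1 (Or.inl h); linarith
  · have := hlt (x 1) c2 hc2 (Or.inl h); linarith
  · have := hlt (x 2) c3 hc3 (Or.inl h); linarith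
  · have := hlt (x 0) c1 hc1 (Or.inr h); linarith
  · have := hlt (x 1) c2 hc2 (Or.inr h); linarith
  · have := hlt (x 2) c3 hc3 (Or.inr h); linarith

lemma eucl_apply_cont (i : Fin 6) :
    Continuous (fun x : EuclideanSpace ℝ (Fin 6) => x i) :=
  (continuous_apply i).comp (PiLp.continuous_ofLp 2 (fun _ : Fin 6 => ℝ))

lemma nb_cont : Continuous nb := by
  apply Real.continuous_sqrt.comp
  exact (((eucl_apply_cont 3).pow 2).add ((eucl_apply_cont 4).pow 2)).add
    ((eucl_apply_cont 5).pow 2)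

lemma G_cont : Continuous G := by
  unfold G
  apply Continuous.add
  apply Continuous.add
  · exact Real.continuous_sqrt.comp (((eucl_apply_cont 0).pow 2).add
      ((continuous_const.mul nb_cont).add (continuous_const.mul (eucl_apply_cont 3))))
  · exact Real.continuous_sqrt.comp (((eucl_apply_cont 1).pow 2).add
      ((continuous_const.mul nb_cont).sub (continuous_const.mul (eucl_apply_cont 3))))
  · exact Real.continuous_sqrt.comp (((eucl_apply_cont 2).pow 2).add
      ((continuous_const.mul nb_cont).add (continuous_const.mul (eucl_apply_cont 4))))

lemma G_nonneg_terms (y : EuclideanSpace ℝ (Fin 6)) :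
    Real.sqrt ((y 0) ^ 2 + (2 * nb y + 2 * y 3)) ≤ G y ∧
    Real.sqrt ((y 1) ^ 2 + (2 * nb y - 2 * y 3)) ≤ G y ∧
    Real.sqrt ((y 2) ^ 2 + (4 * nb y + 4 * y 4)) ≤ G y := by
  unfold G
  refine ⟨?_, ?_, ?_⟩ <;> nlinarith [Real.sqrt_nonneg ((y 0) ^ 2 + (2 * nb y + 2 * y 3)),
    Real.sqrt_nonneg ((y 1) ^ 2 + (2 * nb y - 2 * y 3)),
    Real.sqrt_nonneg ((y 2) ^ 2 + (4 * nb y + 4 * y 4))]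

lemma G_zero : G (0 : EuclideanSpace ℝ (Fin 6)) = 0 := by
  unfold G nb
  simp only [PiLp.zero_apply]
  norm_num

lemma exists_G_one {x : EuclideanSpace ℝ (Fin 6)} (hx : x ≠ 0) :
    ∃ t : ℝ, 0 < t ∧ G (t • x) = 1 := by
  -- find T with 1 ≤ G (T • x)
  have hbig : ∃ T : ℝ, 0 < T ∧ 1 ≤ G (T • x) := by
    by_cases h012 : x 0 ≠ 0 ∨ x 1 ≠ 0 ∨ x 2 ≠ 0
    · -- use a coordinate among first three
      have key : ∀ (j : Fin 6), x j ≠ 0 → ∀ T : ℝ, 0 < T →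
          T * |x j| ≤ Real.sqrt ((T * x j) ^ 2 + 0) := by
        intro j hj T hT
        rw [add_zero, Real.sqrt_sq_eq_abs, abs_mul, abs_of_pos hT]
      rcases h012 with h | h | h
      · refine ⟨|x 0|⁻¹, by positivity, ?_⟩
        have h1 : Real.sqrt (((|x 0|⁻¹ : ℝ) • x) 0 ^ 2 + (2 * nb ((|x 0|⁻¹ : ℝ) • x)
            + 2 * ((|x 0|⁻¹ : ℝ) • x) 3)) ≤ G ((|x 0|⁻¹ : ℝ) • x) :=
          (G_nonneg_terms _).1
        refine le_trans ?_ h1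
        have hc := c1_nonneg ((|x 0|⁻¹ : ℝ) • x)
        have : (1 : ℝ) = |(((|x 0|⁻¹ : ℝ) • x) 0)| := by
          simp only [PiLp.smul_apply, smul_eq_mul, abs_mul, abs_inv, _root_.abs_abs]
          rw [inv_mul_cancel₀ (abs_ne_zero.mpr h)]
        rw [this]
        exact Real.abs_le_sqrt (by nlinarith [_root_.sq_abs (((|x 0|⁻¹ : ℝ) • x) 0)])
      · refine ⟨|x 1|⁻¹, by positivity, ?_⟩
        have h1 := (G_nonneg_terms ((|x 1|⁻¹ : ℝ) • x)).2.1
        refine le_trans ?_ h1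
        have hc := c2_nonneg ((|x 1|⁻¹ : ℝ) • x)
        have : (1 : ℝ) = |(((|x 1|⁻¹ : ℝ) • x) 1)| := by
          simp only [PiLp.smul_apply, smul_eq_mul, abs_mul, abs_inv, _root_.abs_abs]
          rw [inv_mul_cancel₀ (abs_ne_zero.mpr h)]
        rw [this]
        exact Real.abs_le_sqrt (by nlinarith [_root_.sq_abs (((|x 1|⁻¹ : ℝ) • x) 1)])
      · refine ⟨|x 2|⁻¹, by positivity, ?_⟩
        have h1 := (G_nonneg_terms ((|x 2|⁻¹ : ℝ) • x)).2.2
        refine le_trans ?_ h1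
        have hc := c3_nonneg ((|x 2|⁻¹ : ℝ) • x)
        have : (1 : ℝ) = |(((|x 2|⁻¹ : ℝ) • x) 2)| := by
          simp only [PiLp.smul_apply, smul_eq_mul, abs_mul, abs_inv, _root_.abs_abs]
          rw [inv_mul_cancel₀ (abs_ne_zero.mpr h)]
        rw [this]
        exact Real.abs_le_sqrt (by nlinarith [_root_.sq_abs (((|x 2|⁻¹ : ℝ) • x) 2)])
    · -- nb x > 0
      push_neg at h012
      obtain ⟨e0, e1, e2⟩ := h012
      have hnbpos : 0 < nb x := by
        rcases (Real.sqrt_nonneg ((x 3) ^ 2 + (x 4) ^ 2 + (x 5) ^ 2)).lt_or_eq with h | h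
        · exact h
        · exfalso
          apply hx
          have hsum : (x 3) ^ 2 + (x 4) ^ 2 + (x 5) ^ 2 = 0 :=
            le_antisymm (Real.sqrt_eq_zero'.mp h.symm) (by positivity)
          apply eucl_eq_zero
          intro i
          fin_cases i
          · exact e0
          · exact e1
          · exact e2
          · exact (sq_zero_of_sum hsum).1
          · exact (sq_zero_of_sum hsum).2.1
          · exact (sq_zero_of_sum hsum).2.2
      refine ⟨(nb x)⁻¹, by positivity, ?_⟩
      set y := ((nb x)⁻¹ : ℝ) • x with hy
      have hnby : nb y = 1 := by
        rw [hy, nb_smul x (by positivity), inv_mul_cancel₀ (ne_of_gt hnbpos)]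
      set u := Real.sqrt ((y 0) ^ 2 + (2 * nb y + 2 * y 3)) with hu
      set v := Real.sqrt ((y 1) ^ 2 + (2 * nb y - 2 * y 3)) with hv
      have hc1 := c1_nonneg y
      have hc2 := c2_nonneg y
      have hu2 : u ^ 2 = (y 0) ^ 2 + (2 * nb y + 2 * y 3) :=
        Real.sq_sqrt (by nlinarith [sq_nonneg (y 0)])
      have hv2 : v ^ 2 = (y 1) ^ 2 + (2 * nb y - 2 * y 3) :=
        Real.sq_sqrt (by nlinarith [sq_nonneg (y 1)])
      have huv : 4 ≤ (u + v) ^ 2 := by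
        have : u ^ 2 + v ^ 2 ≥ 4 := by
          rw [hu2, hv2, hnby]
          nlinarith [sq_nonneg (y 0), sq_nonneg (y 1)]
        nlinarith [mul_nonneg (Real.sqrt_nonneg ((y 0) ^ 2 + (2 * nb y + 2 * y 3)))
          (Real.sqrt_nonneg ((y 1) ^ 2 + (2 * nb y - 2 * y 3)))]
      have huvpos : 2 ≤ u + v := by
        nlinarith [Real.sqrt_nonneg ((y 0) ^ 2 + (2 * nb y + 2 * y 3)),
          Real.sqrt_nonneg ((y 1) ^ 2 + (2 * nb y - 2 * y 3))]
      have h3 : 0 ≤ Real.sqrt ((y 2) ^ 2 + (4 * nb y + 4 * y 4)) := Real.sqrt_nonneg _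
      unfold G
      linarith
  obtain ⟨T, hT0, hT1⟩ := hbig
  have hcont : ContinuousOn (fun t : ℝ => G (t • x)) (Set.Icc 0 T) :=
    (G_cont.comp (continuous_id.smul continuous_const)).continuousOn
  have hsub := intermediate_value_Icc hT0.le hcont
  have h1mem : (1 : ℝ) ∈ Set.Icc ((fun t : ℝ => G (t • x)) 0) ((fun t : ℝ => G (t • x)) T) := by
    constructor
    · show G ((0:ℝ) • x) ≤ 1
      rw [zero_smul, G_zero]; norm_num
    · exact hT1
  obtain ⟨t, ht, hGt⟩ := hsub h1mem
  refine ⟨t, ?_, hGt⟩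
  rcases ht.1.lt_or_eq with h | h
  · exact h
  · exfalso
    rw [← h] at hGt
    have hGt' : G ((0:ℝ) • x) = 1 := hGt
    rw [zero_smul, G_zero] at hGt'
    norm_num at hGt'

lemma blockEx (a : ℝ) (D : ℂ) :
    ∃ u v : ℂ, u * v = D ∧ normSq u - normSq v = a ∧
      normSq u + normSq v = Real.sqrt (a ^ 2 + 4 * normSq D) := by
  set l := Real.sqrt (a ^ 2 + 4 * normSq D) with hl
  have hinner : (0:ℝ) ≤ a ^ 2 + 4 * normSq D := by
    have := normSq_nonneg D; nlinarith [sq_nonneg a]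
  have hl2 : l ^ 2 = a ^ 2 + 4 * normSq D := Real.sq_sqrt hinner
  have hla : |a| ≤ l := Real.abs_le_sqrt (by linarith [normSq_nonneg D])
  have hla' := abs_le.mp hla
  set m := (l + a) / 2 with hm
  set n := (l - a) / 2 with hn
  have hm0 : 0 ≤ m := by rw [hm]; linarith [hla'.1]
  have hn0 : 0 ≤ n := by rw [hn]; linarith [hla'.2]
  have hmn : m * n = normSq D := by
    rw [hm, hn]; linear_combination hl2 / 4
  by_cases hmz : m = 0
  · have hD0 : D = 0 := by
      rw [← normSq_eq_zero, ← hmn, hmz, zero_mul]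
    refine ⟨0, ((Real.sqrt n : ℝ) : ℂ), by rw [hD0, zero_mul], ?_, ?_⟩
    · rw [map_zero, Complex.normSq_ofReal, Real.mul_self_sqrt hn0]
      have : l = -a := by
        rw [hm] at hmz
        linarith [(div_eq_zero_iff.mp hmz).resolve_right (by norm_num)]
      rw [hn, this]; ring
    · rw [map_zero, Complex.normSq_ofReal, Real.mul_self_sqrt hn0, zero_add, hn]
      have : l = -a := by
        rw [hm] at hmz
        linarith [(div_eq_zero_iff.mp hmz).resolve_right (by norm_num)]
      rw [this]; ring
  · have hmpos : 0 < m := lt_of_le_of_ne hm0 (Ne.symm hmz)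
    have hsm : Real.sqrt m ≠ 0 := by
      intro h
      exact hmz (le_antisymm (Real.sqrt_eq_zero'.mp h) hm0)
    have hu0 : ((Real.sqrt m : ℝ) : ℂ) ≠ 0 := by
      simpa using hsm
    have hnsu : normSq ((Real.sqrt m : ℝ) : ℂ) = m := by
      rw [Complex.normSq_ofReal, Real.mul_self_sqrt hm0]
    refine ⟨((Real.sqrt m : ℝ) : ℂ), D / ((Real.sqrt m : ℝ) : ℂ), ?_, ?_, ?_⟩
    · rw [mul_div_cancel₀ _ hu0]
    · rw [map_div₀, hnsu, ← hmn, mul_comm m n, mul_div_assoc, div_self hmz, mul_one]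
      rw [hm, hn]; ring
    · rw [map_div₀, hnsu, ← hmn, mul_comm m n, mul_div_assoc, div_self hmz, mul_one]
      rw [hm, hn]; ring

lemma DEx (b1 b2 b3 : ℝ) :
    ∃ D1 D2 : ℂ, normSq D1 - normSq D2 = b1 ∧ 2 * (D1 * (starRingEnd ℂ) D2).re = b2 ∧
      2 * (D1 * (starRingEnd ℂ) D2).im = b3 ∧
      normSq D1 + normSq D2 = Real.sqrt (b1 ^ 2 + b2 ^ 2 + b3 ^ 2) := by
  set B := Real.sqrt (b1 ^ 2 + b2 ^ 2 + b3 ^ 2) with hB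
  have hinner : (0:ℝ) ≤ b1 ^ 2 + b2 ^ 2 + b3 ^ 2 := by positivity
  have hB2 : B ^ 2 = b1 ^ 2 + b2 ^ 2 + b3 ^ 2 := Real.sq_sqrt hinner
  have hBb1 := abs_le.mp (Real.abs_le_sqrt
    (by nlinarith [sq_nonneg b2, sq_nonneg b3] : b1 ^ 2 ≤ b1 ^ 2 + b2 ^ 2 + b3 ^ 2))
  set R1 := (B + b1) / 2 with hR1
  set R2 := (B - b1) / 2 with hR2
  have hR10 : 0 ≤ R1 := by rw [hR1]; linarith [hBb1.1]
  have hR20 : 0 ≤ R2 := by rw [hR2]; linarith [hBb1.2]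
  have h4 : b2 ^ 2 + b3 ^ 2 = 4 * R1 * R2 := by
    rw [hR1, hR2]; linear_combination -hB2
  by_cases hR1z : R1 = 0
  · -- degenerate: B = -b1, b2 = b3 = 0
    have hBeq : B = -b1 := by
      rw [hR1] at hR1z
      have := (div_eq_zero_iff.mp hR1z).resolve_right (by norm_num)
      linarith
    have hb23 : b2 ^ 2 + b3 ^ 2 = 0 := by rw [h4, hR1z]; ring
    have hb2z : b2 = 0 := by
      apply pow_eq_zero_iff (n := 2) (by norm_num) |>.mp
      exact le_antisymm (by nlinarith [sq_nonneg b3]) (sq_nonneg b2)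
    have hb3z : b3 = 0 := by
      apply pow_eq_zero_iff (n := 2) (by norm_num) |>.mp
      exact le_antisymm (by nlinarith [sq_nonneg b2]) (sq_nonneg b3)
    refine ⟨0, ((Real.sqrt R2 : ℝ) : ℂ), ?_, ?_, ?_, ?_⟩
    · rw [map_zero, Complex.normSq_ofReal, Real.mul_self_sqrt hR20, hR2, hBeq]
      ring
    · rw [zero_mul, Complex.zero_re, mul_zero, hb2z]
    · rw [zero_mul, Complex.zero_im, mul_zero, hb3z]
    · rw [map_zero, Complex.normSq_ofReal, Real.mul_self_sqrt hR20, zero_add, hR2, hBeq]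
      ring
  · have hR1p : 0 < R1 := lt_of_le_of_ne hR10 (Ne.symm hR1z)
    set sq1 := Real.sqrt R1 with hsq1
    have hs2 : sq1 * sq1 = R1 := Real.mul_self_sqrt hR10
    have hs0 : sq1 ≠ 0 := by
      intro h; exact hR1z (by rw [← hs2, h, mul_zero])
    refine ⟨((sq1 : ℝ) : ℂ), Complex.mk (b2 / (2 * sq1)) (-(b3 / (2 * sq1))), ?_, ?_, ?_, ?_⟩
    · rw [Complex.normSq_ofReal, hs2, Complex.normSq_mk]
      have : b2 / (2 * sq1) * (b2 / (2 * sq1)) + -(b3 / (2 * sq1)) * -(b3 / (2 * sq1))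
          = (b2 ^ 2 + b3 ^ 2) / (4 * R1) := by
        rw [← hs2]; field_simp; ring
      rw [this, h4, mul_comm (4 * R1) R2, mul_div_assoc,
        div_self (by positivity : (4:ℝ) * R1 ≠ 0), mul_one]
      rw [hR1, hR2]; ring
    · rw [Complex.mul_re]
      simp only [Complex.ofReal_re, Complex.ofReal_im, Complex.conj_re, Complex.conj_im,
        zero_mul, sub_zero, neg_neg]
      field_simp
    · rw [Complex.mul_im]
      simp only [Complex.ofReal_re, Complex.ofReal_im, Complex.conj_re, Complex.conj_im,
        zero_mul, add_zero, neg_neg]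
      field_simp
    · rw [Complex.normSq_ofReal, hs2, Complex.normSq_mk]
      have : b2 / (2 * sq1) * (b2 / (2 * sq1)) + -(b3 / (2 * sq1)) * -(b3 / (2 * sq1))
          = (b2 ^ 2 + b3 ^ 2) / (4 * R1) := by
        rw [← hs2]; field_simp; ring
      rw [this, h4, mul_comm (4 * R1) R2, mul_div_assoc,
        div_self (by positivity : (4:ℝ) * R1 ≠ 0), mul_one]
      rw [hR1, hR2]; ring

lemma exists_rep (y : EuclideanSpace ℝ (Fin 6)) (hG : G y = 1) :
    ∃ w : Fin 6 → ℂ, Qu w ∧ nsum w = 1 ∧ phi w = y := by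
  obtain ⟨D1, D2, hb1, hb2, hb3, hBsum⟩ := DEx (y 3) (y 4) (y 5)
  have hBnb : normSq D1 + normSq D2 = nb y := hBsum
  obtain ⟨u1, v1, huv1, hd1, hs1⟩ := blockEx (y 0) D1
  obtain ⟨u2, v2, huv2, hd2, hs2⟩ := blockEx (y 1) D2
  obtain ⟨u3, v3, huv3, hd3, hs3⟩ := blockEx (y 2) (D1 + D2)
  set w : Fin 6 → ℂ := ![u1, u3, u2, v2, v3, v1] with hwdef
  have hw0 : w 0 = u1 := rfl
  have hw1 : w 1 = u3 := rfl
  have hw2 : w 2 = u2 := rfl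
  have hw3 : w 3 = v2 := rfl
  have hw4 : w 4 = v3 := rfl
  have hw5 : w 5 = v1 := rfl
  have hQu : Qu w := by
    unfold Qu
    rw [hw0, hw5, hw2, hw3, hw1, hw4, huv1, huv2, huv3]
  have hDd1 : Dd1 w = D1 := by unfold Dd1; rw [hw0, hw5, huv1]
  have hDd2 : Dd2 w = D2 := by unfold Dd2; rw [hw2, hw3, huv2]
  have hD1v : (y 0) ^ 2 + 4 * normSq D1 = (y 0) ^ 2 + (2 * nb y + 2 * y 3) := by
    linarith
  have hD2v : (y 1) ^ 2 + 4 * normSq D2 = (y 1) ^ 2 + (2 * nb y - 2 * y 3) := by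
    linarith
  have hD3v : (y 2) ^ 2 + 4 * normSq (D1 + D2) = (y 2) ^ 2 + (4 * nb y + 4 * y 4) := by
    rw [normSq_add]
    linarith
  have e1 : normSq u1 + normSq v1 = Real.sqrt ((y 0) ^ 2 + (2 * nb y + 2 * y 3)) := by
    rw [hs1, hD1v]
  have e2 : normSq u2 + normSq v2 = Real.sqrt ((y 1) ^ 2 + (2 * nb y - 2 * y 3)) := by
    rw [hs2, hD2v]
  have e3 : normSq u3 + normSq v3 = Real.sqrt ((y 2) ^ 2 + (4 * nb y + 4 * y 4)) := by
    rw [hs3, hD3v]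
  have hnsum : nsum w = 1 := by
    unfold nsum
    rw [hw0, hw1, hw2, hw3, hw4, hw5]
    unfold G at hG
    linarith
  refine ⟨w, hQu, hnsum, ?_⟩
  have hcc : cc w = D1 * (starRingEnd ℂ) D2 := by
    unfold cc; rw [hDd1, hDd2]
  ext i
  fin_cases i
  · exact (phi0 hnsum).trans (by rw [hw0, hw5]; exact hd1)
  · exact (phi1 hnsum).trans (by rw [hw2, hw3]; exact hd2)
  · exact (phi2 hnsum).trans (by rw [hw1, hw4]; exact hd3)
  · exact (phi3 hnsum).trans (by rw [hDd1, hDd2]; exact hb1)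
  · exact (phi4 hnsum).trans (by rw [hcc]; exact hb2)
  · exact (phi5 hnsum).trans (by rw [hcc]; exact hb3)

lemma norm_eq_of_normSq_eq {z z' : ℂ} (h : normSq z = normSq z') : ‖z‖ = ‖z'‖ := by
  rw [Complex.norm_def, Complex.norm_def, h]

lemma hopf_fiber {z1 z2 z1' z2' : ℂ} (h1 : normSq z1 = normSq z1')
    (h2 : normSq z2 = normSq z2')
    (h3 : z1 * (starRingEnd ℂ) z2 = z1' * (starRingEnd ℂ) z2') :
    ∃ l : ℂ, ‖l‖ = 1 ∧ z1' = l * z1 ∧ z2' = l * z2 := by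
  by_cases hz1 : z1 = 0
  · have hz1' : z1' = 0 := by
      rw [← normSq_eq_zero, ← h1, hz1, map_zero]
    by_cases hz2 : z2 = 0
    · have hz2' : z2' = 0 := by rw [← normSq_eq_zero, ← h2, hz2, map_zero]
      exact ⟨1, by simp, by simp [hz1, hz1'], by simp [hz2, hz2']⟩
    · refine ⟨z2' / z2, ?_, ?_, ?_⟩
      · rw [norm_div, ← norm_eq_of_normSq_eq h2, div_self (norm_ne_zero_iff.mpr hz2)]
      · simp [hz1, hz1']
      · rw [div_mul_eq_mul_div, mul_div_assoc, div_self hz2, mul_one]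
  · have hz1' : z1' ≠ 0 := fun h =>
      hz1 (normSq_eq_zero.mp (by rw [h1, h, map_zero]))
    have hcz1 : (starRingEnd ℂ) z1 ≠ 0 := by
      simpa using hz1
    refine ⟨z1' / z1, ?_, ?_, ?_⟩
    · rw [norm_div, ← norm_eq_of_normSq_eq h1, div_self (norm_ne_zero_iff.mpr hz1)]
    · rw [div_mul_eq_mul_div, mul_div_assoc, div_self hz1, mul_one]
    · have hc : (starRingEnd ℂ) z1 * z2 = (starRingEnd ℂ) z1' * z2' := by
        have := congrArg (starRingEnd ℂ) h3
        simpa [map_mul, mul_comm] using this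
      have key : (starRingEnd ℂ) z1 * (z1' * z2) = (starRingEnd ℂ) z1 * (z1 * z2') := by
        calc (starRingEnd ℂ) z1 * (z1' * z2) = z1' * ((starRingEnd ℂ) z1 * z2) := by ring
          _ = z1' * ((starRingEnd ℂ) z1' * z2') := by rw [hc]
          _ = (z1' * (starRingEnd ℂ) z1') * z2' := by ring
          _ = (normSq z1' : ℂ) * z2' := by rw [Complex.mul_conj]
          _ = (normSq z1 : ℂ) * z2' := by rw [h1]
          _ = (z1 * (starRingEnd ℂ) z1) * z2' := by rw [Complex.mul_conj]
          _ = (starRingEnd ℂ) z1 * (z1 * z2') := by ring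
      have hkey := mul_left_cancel₀ hcz1 key
      rw [div_mul_eq_mul_div, eq_div_iff hz1]
      linear_combination -hkey

lemma moduli_eq {x y x' y' : ℝ} (hx : 0 ≤ x) (hy : 0 ≤ y) (hx' : 0 ≤ x') (hy' : 0 ≤ y')
    (h1 : x - y = x' - y') (h2 : x * y = x' * y') : x = x' ∧ y = y' := by
  have hsq : (x + y) ^ 2 = (x' + y') ^ 2 := by nlinarith
  rcases eq_or_lt_of_le (by linarith : (0:ℝ) ≤ x + y + x' + y') with hz | hz
  · constructor <;> nlinarith
  · have hfac : (x + y - x' - y') * (x + y + x' + y') = 0 := by nlinarith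
    have hsum : x + y = x' + y' := by
      rcases mul_eq_zero.mp hfac with h | h
      · linarith
      · linarith
    constructor <;> linarith

lemma block_phase {u v u' v' l : ℂ} (hl : ‖l‖ = 1) (hu : normSq u = normSq u')
    (hv : normSq v = normSq v') (hp : u' * v' = l * (u * v)) :
    ∃ τ σ : ℂ, ‖τ‖ = 1 ∧ ‖σ‖ = 1 ∧ τ * σ = l ∧ u' = τ * u ∧ v' = σ * v := by
  by_cases hv0 : v = 0
  · have hv0' : v' = 0 := by rw [← normSq_eq_zero, ← hv, hv0, map_zero]
    by_cases hu0 : u = 0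
    · have hu0' : u' = 0 := by rw [← normSq_eq_zero, ← hu, hu0, map_zero]
      exact ⟨1, l, by simp, hl, one_mul l, by simp [hu0, hu0'], by simp [hv0, hv0']⟩
    · have hu0' : u' ≠ 0 := fun h =>
        hu0 (normSq_eq_zero.mp (by rw [hu, h, map_zero]))
      refine ⟨u' / u, l * u / u', ?_, ?_, ?_, ?_, ?_⟩
      · rw [norm_div, ← norm_eq_of_normSq_eq hu, div_self (norm_ne_zero_iff.mpr hu0)]
      · rw [norm_div, norm_mul, hl, one_mul, norm_eq_of_normSq_eq hu,
          div_self (norm_ne_zero_iff.mpr hu0')]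
      · field_simp
      · rw [div_mul_eq_mul_div, mul_div_assoc, div_self hu0, mul_one]
      · simp [hv0, hv0']
  · have hv0' : v' ≠ 0 := fun h =>
      hv0 (normSq_eq_zero.mp (by rw [hv, h, map_zero]))
    refine ⟨l * v / v', v' / v, ?_, ?_, ?_, ?_, ?_⟩
    · rw [norm_div, norm_mul, hl, one_mul, norm_eq_of_normSq_eq hv,
        div_self (norm_ne_zero_iff.mpr hv0')]
    · rw [norm_div, ← norm_eq_of_normSq_eq hv, div_self (norm_ne_zero_iff.mpr hv0)]
    · field_simp
    · rw [div_mul_eq_mul_div, eq_div_iff hv0']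
      linear_combination hp
    · rw [div_mul_eq_mul_div, mul_div_assoc, div_self hv0, mul_one]

lemma exists_unit_sq {l : ℂ} (hl : ‖l‖ = 1) : ∃ c : ℂ, c * c = l ∧ ‖c‖ = 1 := by
  have hl0 : l ≠ 0 := by intro h; rw [h] at hl; simp at hl
  refine ⟨Complex.exp (Complex.log l / 2), ?_, ?_⟩
  · rw [← Complex.exp_add]
    rw [show Complex.log l / 2 + Complex.log l / 2 = Complex.log l by ring]
    exact Complex.exp_log hl0
  · rw [Complex.norm_exp]
    have : (Complex.log l / 2).re = Real.log ‖l‖ / 2 := by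
      rw [div_ofNat_re, Complex.log_re]
    rw [this]
    rw [hl]
    simp

lemma torus_assemble {τ : Fin 6 → ℂ} (hτ : ∀ k, ‖τ k‖ = 1)
    (h05 : τ 0 * τ 5 = τ 1 * τ 4) (h23 : τ 2 * τ 3 = τ 1 * τ 4) :
    ∃ t : Fin 4 → ℂ, (∀ i, ‖t i‖ = 1) ∧ ∀ k, torusCoef t k = τ k := by
  have hne : ∀ k, τ k ≠ 0 := fun k h => by
    have := hτ k; rw [h] at this; simp at this
  set lam := τ 1 * τ 4 with hlam
  have hlamne : lam ≠ 0 := mul_ne_zero (hne 1) (hne 4)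
  have hμnorm : ‖τ 0 * τ 1 * τ 2 / lam‖ = 1 := by
    rw [norm_div, norm_mul, norm_mul, norm_mul, hτ 0, hτ 1, hτ 2, hτ 4]
    norm_num
  obtain ⟨c, hc2, hc1⟩ := exists_unit_sq hμnorm
  have hc0 : c ≠ 0 := fun h => by rw [h] at hc1; simp at hc1
  refine ⟨![c, τ 0 / c, τ 1 / c, τ 2 / c], ?_, ?_⟩
  · intro i
    fin_cases i
    · exact hc1
    · show ‖τ 0 / c‖ = 1
      rw [norm_div, hτ 0, hc1]; norm_num
    · show ‖τ 1 / c‖ = 1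
      rw [norm_div, hτ 1, hc1]; norm_num
    · show ‖τ 2 / c‖ = 1
      rw [norm_div, hτ 2, hc1]; norm_num
  · intro k
    have hcc : c * c = τ 0 * τ 1 * τ 2 / lam := hc2
    fin_cases k
    · show c * (τ 0 / c) = τ 0
      field_simp
    · show c * (τ 1 / c) = τ 1
      field_simp
    · show c * (τ 2 / c) = τ 2
      field_simp
    · show (τ 0 / c) * (τ 1 / c) = τ 3
      rw [div_mul_div_comm, hcc, div_div_eq_mul_div,
        div_eq_iff (mul_ne_zero (mul_ne_zero (hne 0) (hne 1)) (hne 2))]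
      linear_combination (-(τ 0 * τ 1)) * h23
    · show (τ 0 / c) * (τ 2 / c) = τ 4
      rw [div_mul_div_comm, hcc, div_div_eq_mul_div,
        div_eq_iff (mul_ne_zero (mul_ne_zero (hne 0) (hne 1)) (hne 2))]
      linear_combination (τ 0 * τ 2) * hlam
    · show (τ 1 / c) * (τ 2 / c) = τ 5
      rw [div_mul_div_comm, hcc, div_div_eq_mul_div,
        div_eq_iff (mul_ne_zero (mul_ne_zero (hne 0) (hne 1)) (hne 2))]
      linear_combination (-(τ 1 * τ 2)) * h05

lemma orbit_of_phi_eq {w w' : Fin 6 → ℂ} (hq : Qu w) (hq' : Qu w')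
    (hn : nsum w = 1) (hn' : nsum w' = 1) (h : phi w = phi w') :
    ∃ t : Fin 4 → ℂ, (∀ i, ‖t i‖ = 1) ∧ ∀ k, w' k = torusCoef t k * w k := by
  have A0 : normSq (w 0) - normSq (w 5) = normSq (w' 0) - normSq (w' 5) := by
    rw [← phi0 hn, ← phi0 hn', h]
  have A1 : normSq (w 2) - normSq (w 3) = normSq (w' 2) - normSq (w' 3) := by
    rw [← phi1 hn, ← phi1 hn', h]
  have A2 : normSq (w 1) - normSq (w 4) = normSq (w' 1) - normSq (w' 4) := by
    rw [← phi2 hn, ← phi2 hn', h]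
  have B3 : normSq (Dd1 w) - normSq (Dd2 w) = normSq (Dd1 w') - normSq (Dd2 w') := by
    rw [← phi3 hn, ← phi3 hn', h]
  have B4 : 2 * (cc w).re = 2 * (cc w').re := by rw [← phi4 hn, ← phi4 hn', h]
  have B5 : 2 * (cc w).im = 2 * (cc w').im := by rw [← phi5 hn, ← phi5 hn', h]
  have hcceq : cc w = cc w' := Complex.ext (by linarith) (by linarith)
  have hnbeq : normSq (Dd1 w) + normSq (Dd2 w) = normSq (Dd1 w') + normSq (Dd2 w') := by
    rw [← nb_phi hn, ← nb_phi hn', h]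
  have hns1 : normSq (Dd1 w) = normSq (Dd1 w') := by linarith
  have hns2 : normSq (Dd2 w) = normSq (Dd2 w') := by linarith
  obtain ⟨l, hl, hL1, hL2⟩ := hopf_fiber hns1 hns2 hcceq
  have hnl : normSq l = 1 := by
    rw [Complex.normSq_eq_norm_sq, hl]; norm_num
  have hq1 : Dd1 w + Dd2 w = w 1 * w 4 := hq
  have hq1' : Dd1 w' + Dd2 w' = w' 1 * w' 4 := hq'
  have hL3 : w' 1 * w' 4 = l * (w 1 * w 4) := by
    rw [← hq1, ← hq1', hL1, hL2]; ring
  have hns3 : normSq (w 1 * w 4) = normSq (w' 1 * w' 4) := by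
    rw [hL3, Complex.normSq_mul l (w 1 * w 4), hnl, one_mul]
  -- moduli per coordinate
  have m05 := moduli_eq (normSq_nonneg (w 0)) (normSq_nonneg (w 5))
    (normSq_nonneg (w' 0)) (normSq_nonneg (w' 5)) A0
    (by rw [← Complex.normSq_mul, ← Complex.normSq_mul]; exact hns1)
  have m23 := moduli_eq (normSq_nonneg (w 2)) (normSq_nonneg (w 3))
    (normSq_nonneg (w' 2)) (normSq_nonneg (w' 3)) A1
    (by rw [← Complex.normSq_mul, ← Complex.normSq_mul]; exact hns2)
  have m14 := moduli_eq (normSq_nonneg (w 1)) (normSq_nonneg (w 4))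
    (normSq_nonneg (w' 1)) (normSq_nonneg (w' 4)) A2
    (by rw [← Complex.normSq_mul, ← Complex.normSq_mul]; exact hns3)
  obtain ⟨t0, t5, ht0, ht5, hp05, he0, he5⟩ := block_phase hl m05.1 m05.2 hL1
  obtain ⟨t2, t3, ht2, ht3, hp23, he2, he3⟩ := block_phase hl m23.1 m23.2 hL2
  obtain ⟨t1, t4, ht1, ht4, hp14, he1, he4⟩ := block_phase hl m14.1 m14.2 hL3
  set τ : Fin 6 → ℂ := ![t0, t1, t2, t3, t4, t5] with hτdef
  have hτn : ∀ k, ‖τ k‖ = 1 := by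
    intro k
    fin_cases k
    · exact ht0
    · exact ht1
    · exact ht2
    · exact ht3
    · exact ht4
    · exact ht5
  have h05 : τ 0 * τ 5 = τ 1 * τ 4 := by
    show t0 * t5 = t1 * t4
    rw [hp05, hp14]
  have h23 : τ 2 * τ 3 = τ 1 * τ 4 := by
    show t2 * t3 = t1 * t4
    rw [hp23, hp14]
  obtain ⟨t, htn, hteq⟩ := torus_assemble hτn h05 h23
  refine ⟨t, htn, ?_⟩
  intro k
  rw [hteq k]
  fin_cases k
  · exact he0
  · exact he1
  · exact he2
  · exact he3
  · exact he4
  · exact he5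

/- ### topology and assembly -/

lemma phi_proj_invariant :
    ∀ x y : {w : Fin 6 → ℂ // w ≠ 0}, projRel x y → phi x.1 = phi y.1 := by
  rintro x y ⟨c, hc, hxy⟩
  rw [← hxy]
  exact (phi_smul hc).symm

def Phi : CP5 → EuclideanSpace ℝ (Fin 6) :=
  Quot.lift (fun w => phi w.1) phi_proj_invariant

lemma phi_subtype_cont : Continuous fun w : {w : Fin 6 → ℂ // w ≠ 0} => phi w.1 := by
  have hval : Continuous fun w : {w : Fin 6 → ℂ // w ≠ 0} => w.1 := continuous_subtype_val
  have happ : ∀ k : Fin 6, Continuous fun w : {w : Fin 6 → ℂ // w ≠ 0} => w.1 k :=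
    fun k => (continuous_apply k).comp hval
  have hcns : ∀ k : Fin 6, Continuous fun w : {w : Fin 6 → ℂ // w ≠ 0} => normSq (w.1 k) :=
    fun k => Complex.continuous_normSq.comp (happ k)
  have hns : Continuous fun w : {w : Fin 6 → ℂ // w ≠ 0} => nsum w.1 := by
    show Continuous fun w : {w : Fin 6 → ℂ // w ≠ 0} =>
      normSq (w.1 0) + normSq (w.1 1) + normSq (w.1 2) + normSq (w.1 3) +
        normSq (w.1 4) + normSq (w.1 5)
    exact ((((((hcns 0).add (hcns 1)).add (hcns 2)).add (hcns 3)).add (hcns 4)).add (hcns 5))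
  have hns0 : ∀ w : {w : Fin 6 → ℂ // w ≠ 0}, nsum w.1 ≠ 0 := fun w => ne_of_gt (nsum_pos w.2)
  have hns20 : ∀ w : {w : Fin 6 → ℂ // w ≠ 0}, (nsum w.1) ^ 2 ≠ 0 :=
    fun w => pow_ne_zero _ (hns0 w)
  have hD1 : Continuous fun w : {w : Fin 6 → ℂ // w ≠ 0} => Dd1 w.1 := by
    show Continuous fun w : {w : Fin 6 → ℂ // w ≠ 0} => w.1 0 * w.1 5
    exact (happ 0).mul (happ 5)
  have hD2 : Continuous fun w : {w : Fin 6 → ℂ // w ≠ 0} => Dd2 w.1 := by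
    show Continuous fun w : {w : Fin 6 → ℂ // w ≠ 0} => w.1 2 * w.1 3
    exact (happ 2).mul (happ 3)
  have hccc : Continuous fun w : {w : Fin 6 → ℂ // w ≠ 0} => cc w.1 := by
    show Continuous fun w : {w : Fin 6 → ℂ // w ≠ 0} => Dd1 w.1 * (starRingEnd ℂ) (Dd2 w.1)
    exact hD1.mul (Complex.continuous_conj.comp hD2)
  have hraw : Continuous fun w : {w : Fin 6 → ℂ // w ≠ 0} => rawPhi w.1 := by
    apply continuous_pi
    intro i
    fin_cases i
    · show Continuous fun w : {w : Fin 6 → ℂ // w ≠ 0} =>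
        (normSq (w.1 0) - normSq (w.1 5)) / nsum w.1
      exact ((hcns 0).sub (hcns 5)).div hns hns0
    · show Continuous fun w : {w : Fin 6 → ℂ // w ≠ 0} =>
        (normSq (w.1 2) - normSq (w.1 3)) / nsum w.1
      exact ((hcns 2).sub (hcns 3)).div hns hns0
    · show Continuous fun w : {w : Fin 6 → ℂ // w ≠ 0} =>
        (normSq (w.1 1) - normSq (w.1 4)) / nsum w.1
      exact ((hcns 1).sub (hcns 4)).div hns hns0
    · show Continuous fun w : {w : Fin 6 → ℂ // w ≠ 0} =>
        (normSq (Dd1 w.1) - normSq (Dd2 w.1)) / (nsum w.1) ^ 2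
      exact ((Complex.continuous_normSq.comp hD1).sub
        (Complex.continuous_normSq.comp hD2)).div (hns.pow 2) hns20
    · show Continuous fun w : {w : Fin 6 → ℂ // w ≠ 0} =>
        (2 * (cc w.1).re) / (nsum w.1) ^ 2
      exact (continuous_const.mul (Complex.continuous_re.comp hccc)).div (hns.pow 2) hns20
    · show Continuous fun w : {w : Fin 6 → ℂ // w ≠ 0} =>
        (2 * (cc w.1).im) / (nsum w.1) ^ 2
      exact (continuous_const.mul (Complex.continuous_im.comp hccc)).div (hns.pow 2) hns20
  exact (PiLp.continuous_toLp 2 (fun _ : Fin 6 => ℝ)).comp hraw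

lemma Phi_cont : Continuous Phi :=
  continuous_quot_lift _ phi_subtype_cont

lemma nsum_fun_zero : nsum (0 : Fin 6 → ℂ) = 0 := by
  unfold nsum; simp

lemma quadric_rep {p : CP5} (hp : p ∈ pluckerQuadric) :
    ∃ w : {w : Fin 6 → ℂ // w ≠ 0}, Quot.mk projRel w = p ∧ Qu w.1 ∧ nsum w.1 = 1 := by
  obtain ⟨w, hwp, hwq⟩ := hp
  have hpos : 0 < nsum w.1 := nsum_pos w.2
  set r := Real.sqrt (nsum w.1) with hr
  have hrpos : 0 < r := Real.sqrt_pos.mpr hpos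
  have hr2 : r * r = nsum w.1 := Real.mul_self_sqrt hpos.le
  set w' : Fin 6 → ℂ := fun k => ((r⁻¹ : ℝ) : ℂ) * w.1 k with hw'
  have hterm : ∀ k, normSq (w' k) = r⁻¹ * r⁻¹ * normSq (w.1 k) := fun k => by
    rw [hw', Complex.normSq_mul, Complex.normSq_ofReal]
  have hns' : nsum w' = 1 := by
    show normSq (w' 0) + normSq (w' 1) + normSq (w' 2) + normSq (w' 3) +
      normSq (w' 4) + normSq (w' 5) = 1
    rw [hterm 0, hterm 1, hterm 2, hterm 3, hterm 4, hterm 5]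
    have hsum : normSq (w.1 0) + normSq (w.1 1) + normSq (w.1 2) + normSq (w.1 3) +
        normSq (w.1 4) + normSq (w.1 5) = r * r := hr2.symm
    rw [show r⁻¹ * r⁻¹ * normSq (w.1 0) + r⁻¹ * r⁻¹ * normSq (w.1 1) +
        r⁻¹ * r⁻¹ * normSq (w.1 2) + r⁻¹ * r⁻¹ * normSq (w.1 3) +
        r⁻¹ * r⁻¹ * normSq (w.1 4) + r⁻¹ * r⁻¹ * normSq (w.1 5)
        = r⁻¹ * r⁻¹ * (normSq (w.1 0) + normSq (w.1 1) + normSq (w.1 2) + normSq (w.1 3) +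
          normSq (w.1 4) + normSq (w.1 5)) from by ring, hsum]
    field_simp
  have hw'0 : w' ≠ 0 := by
    intro h
    rw [h, nsum_fun_zero] at hns'
    norm_num at hns'
  have hQu' : Qu w' := by
    unfold Qu
    rw [hw']
    show ((r⁻¹ : ℝ) : ℂ) * w.1 0 * (((r⁻¹ : ℝ) : ℂ) * w.1 5) +
      ((r⁻¹ : ℝ) : ℂ) * w.1 2 * (((r⁻¹ : ℝ) : ℂ) * w.1 3) =
      ((r⁻¹ : ℝ) : ℂ) * w.1 1 * (((r⁻¹ : ℝ) : ℂ) * w.1 4)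
    linear_combination (((r⁻¹ : ℝ) : ℂ) * ((r⁻¹ : ℝ) : ℂ)) * hwq
  refine ⟨⟨w', hw'0⟩, ?_, hQu', hns'⟩
  rw [← hwp]
  apply Quot.sound
  refine ⟨((r : ℝ) : ℂ), Complex.ofReal_ne_zero.mpr (ne_of_gt hrpos), ?_⟩
  funext k
  show ((r : ℝ) : ℂ) * (((r⁻¹ : ℝ) : ℂ) * w.1 k) = w.1 k
  rw [← mul_assoc, ← Complex.ofReal_mul, mul_inv_cancel₀ (ne_of_gt hrpos),
    Complex.ofReal_one, one_mul]

lemma Phi_ne_zero (p : ↥pluckerQuadric) : Phi p.1 ≠ 0 := by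
  obtain ⟨w, hw, hq, hn⟩ := quadric_rep p.2
  have : Phi p.1 = phi w.1 := by rw [← hw]; rfl
  rw [this]
  exact phi_ne_zero hq hn

def Fsub (p : ↥pluckerQuadric) : Metric.sphere (0 : EuclideanSpace ℝ (Fin 6)) 1 :=
  ⟨‖Phi p.1‖⁻¹ • Phi p.1, by
    rw [mem_sphere_zero_iff_norm]
    exact norm_smul_inv_norm (Phi_ne_zero p)⟩

lemma Fsub_invariant : ∀ p q : ↥pluckerQuadric, orbitRel p q → Fsub p = Fsub q := by
  rintro p q ⟨t, ht, w, w', hw, hw', hrel⟩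
  have hval : Phi p.1 = Phi q.1 := by
    rw [← hw, ← hw']
    show phi w.1 = phi w'.1
    have hw'1 : w'.1 = fun k => torusCoef t k * w.1 k := funext hrel
    rw [hw'1, phi_torus ht]
  unfold Fsub
  congr 1
  rw [hval]

def Fbar : Quot orbitRel → Metric.sphere (0 : EuclideanSpace ℝ (Fin 6)) 1 :=
  Quot.lift Fsub Fsub_invariant

lemma Fbar_cont : Continuous Fbar := by
  apply continuous_quot_lift
  apply Continuous.subtype_mk
  have hg : Continuous fun p : ↥pluckerQuadric => Phi p.1 :=
    Phi_cont.comp continuous_subtype_val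
  exact (hg.norm.inv₀ fun p => norm_ne_zero_iff.mpr (Phi_ne_zero p)).smul hg

lemma Fbar_inj : Function.Injective Fbar := by
  intro a b
  induction' a using Quot.ind with p
  induction' b using Quot.ind with q
  intro hab
  have hab' : Fsub p = Fsub q := hab
  obtain ⟨wp, hwp, hqp, hnp⟩ := quadric_rep p.2
  obtain ⟨wq, hwq, hqq, hnq⟩ := quadric_rep q.2
  have hvp : Phi p.1 = phi wp.1 := by rw [← hwp]; rfl
  have hvq : Phi q.1 = phi wq.1 := by rw [← hwq]; rfl
  have hval : ‖phi wp.1‖⁻¹ • phi wp.1 = ‖phi wq.1‖⁻¹ • phi wq.1 := by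
    have h2 := congrArg Subtype.val hab'
    rw [show (Fsub p).val = ‖Phi p.1‖⁻¹ • Phi p.1 from rfl,
      show (Fsub q).val = ‖Phi q.1‖⁻¹ • Phi q.1 from rfl, hvp, hvq] at h2
    exact h2
  have hp0 : phi wp.1 ≠ 0 := phi_ne_zero hqp hnp
  have hq0 : phi wq.1 ≠ 0 := phi_ne_zero hqq hnq
  have hnormp : 0 < ‖phi wp.1‖ := norm_pos_iff.mpr hp0
  have hnormq : 0 < ‖phi wq.1‖ := norm_pos_iff.mpr hq0
  have hGp : G (phi wp.1) = 1 := G_phi hqp hnp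
  have hGq : G (phi wq.1) = 1 := G_phi hqq hnq
  set s := ‖phi wq.1‖ * ‖phi wp.1‖⁻¹ with hs
  have hratio : phi wq.1 = s • phi wp.1 := by
    calc phi wq.1 = ‖phi wq.1‖ • (‖phi wq.1‖⁻¹ • phi wq.1) := by
          rw [smul_smul, mul_inv_cancel₀ (ne_of_gt hnormq), one_smul]
      _ = ‖phi wq.1‖ • (‖phi wp.1‖⁻¹ • phi wp.1) := by rw [hval]
      _ = s • phi wp.1 := by rw [smul_smul]
  have hspos : 0 < s := by rw [hs]; positivity
  have hseq : s = 1 := by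
    rcases lt_trichotomy s 1 with hlt | heq | hgt
    · exfalso
      have hlt2 := G_smul_lt hp0 hspos.le hlt
      rw [← hratio, hGp, hGq] at hlt2
      exact lt_irrefl 1 hlt2
    · exact heq
    · exfalso
      have hback : phi wp.1 = s⁻¹ • phi wq.1 := by
        rw [hratio, smul_smul, inv_mul_cancel₀ (ne_of_gt hspos), one_smul]
      have hlt2 := G_smul_lt hq0 (by positivity : (0:ℝ) ≤ s⁻¹) (inv_lt_one_of_one_lt₀ hgt)
      rw [← hback, hGp, hGq] at hlt2
      exact lt_irrefl 1 hlt2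
  have hphieq : phi wp.1 = phi wq.1 := by rw [hratio, hseq, one_smul]
  obtain ⟨t, htn, hrel⟩ := orbit_of_phi_eq hqp hqq hnp hnq hphieq
  exact Quot.sound ⟨t, htn, wp, wq, hwp, hwq, hrel⟩

lemma Fbar_surj : Function.Surjective Fbar := by
  intro x
  have hx1 : ‖x.1‖ = 1 := mem_sphere_zero_iff_norm.mp x.2
  have hx0 : x.1 ≠ 0 := by intro h; rw [h] at hx1; simp at hx1
  obtain ⟨t, ht, hGt⟩ := exists_G_one hx0
  obtain ⟨w, hQu, hns, hphi⟩ := exists_rep (t • x.1) hGt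
  have hw0 : w ≠ 0 := by
    intro h
    rw [h, nsum_fun_zero] at hns
    norm_num at hns
  have hmem : Quot.mk projRel ⟨w, hw0⟩ ∈ pluckerQuadric := ⟨⟨w, hw0⟩, rfl, hQu⟩
  refine ⟨Quot.mk orbitRel ⟨Quot.mk projRel ⟨w, hw0⟩, hmem⟩, ?_⟩
  apply Subtype.ext
  show ‖Phi (Quot.mk projRel ⟨w, hw0⟩)‖⁻¹ • Phi (Quot.mk projRel ⟨w, hw0⟩) = x.1
  have hPw : Phi (Quot.mk projRel ⟨w, hw0⟩) = phi w := rfl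
  rw [hPw, hphi, norm_smul, Real.norm_eq_abs, abs_of_pos ht, hx1, mul_one, smul_smul,
    inv_mul_cancel₀ (ne_of_gt ht), one_smul]

lemma plucker_compact : IsCompact pluckerQuadric := by
  have hap : ∀ k : Fin 6, Continuous fun w : Fin 6 → ℂ => w k := fun k => continuous_apply k
  set S : Set (Fin 6 → ℂ) := {w | nsum w = 1 ∧ Qu w} with hS
  have hnscont : Continuous nsum := by
    show Continuous fun w : Fin 6 → ℂ =>
      normSq (w 0) + normSq (w 1) + normSq (w 2) + normSq (w 3) + normSq (w 4) + normSq (w 5)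
    have hcn : ∀ k : Fin 6, Continuous fun w : Fin 6 → ℂ => normSq (w k) :=
      fun k => Complex.continuous_normSq.comp (hap k)
    exact ((((((hcn 0).add (hcn 1)).add (hcn 2)).add (hcn 3)).add (hcn 4)).add (hcn 5))
  have hclosed : IsClosed S := by
    apply IsClosed.inter
    · exact isClosed_eq hnscont continuous_const
    · exact isClosed_eq (((hap 0).mul (hap 5)).add ((hap 2).mul (hap 3)))
        ((hap 1).mul (hap 4))
  have hbdd : Bornology.IsBounded S := by
    apply isBounded_iff_forall_norm_le.2
    refine ⟨1, ?_⟩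
    intro w hw
    have hn1 : nsum w = 1 := hw.1
    have hk : ∀ k : Fin 6, ‖w k‖ ≤ 1 := by
      have h0 := normSq_nonneg (w 0); have h1 := normSq_nonneg (w 1)
      have h2 := normSq_nonneg (w 2); have h3 := normSq_nonneg (w 3)
      have h4 := normSq_nonneg (w 4); have h5 := normSq_nonneg (w 5)
      unfold nsum at hn1
      intro k
      have hsq : normSq (w k) ≤ 1 := by
        fin_cases k <;>
          simp only [Fin.zero_eta, Fin.mk_one, Fin.reduceFinMk, Fin.isValue] <;> linarith
      have := Complex.sq_norm (w k)
      nlinarith [norm_nonneg (w k)]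
    exact (pi_norm_le_iff_of_nonneg zero_le_one).2 hk
  have hScomp : IsCompact S := Metric.isCompact_of_isClosed_isBounded hclosed hbdd
  haveI hScs : CompactSpace ↥S := isCompact_iff_compactSpace.mp hScomp
  have hne : ∀ w : ↥S, w.1 ≠ 0 := by
    intro w h
    have := w.2.1
    rw [h, nsum_fun_zero] at this
    norm_num at this
  set f : ↥S → CP5 := fun w => Quot.mk projRel ⟨w.1, hne w⟩ with hf
  have hfc : Continuous f := by
    apply continuous_quot_mk.comp
    exact Continuous.subtype_mk continuous_subtype_val _
  have himg : f '' Set.univ = pluckerQuadric := by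
    apply Set.eq_of_subset_of_subset
    · rintro p ⟨w, -, rfl⟩
      exact ⟨⟨w.1, hne w⟩, rfl, w.2.2⟩
    · intro p hp
      obtain ⟨w, hwp, hQ, hn⟩ := quadric_rep hp
      refine ⟨⟨w.1, hn, hQ⟩, Set.mem_univ _, ?_⟩
      rw [← hwp, hf]
  rw [← himg]
  exact (isCompact_univ).image hfc

end OrbitSphere

/-- the orbit space `G₄,₂/T⁴` is homotopy equivalent to the 5-sphere `S⁵`
(the unit sphere of `ℝ⁶`): there are continuous maps in both directions whose composites
are homotopic to the identities. -/
theorem orbitSpace_homotopyEquiv_sphere :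
    Nonempty (ContinuousMap.HomotopyEquiv (Quot orbitRel)
      (Metric.sphere (0 : EuclideanSpace ℝ (Fin 6)) 1)) := by
  haveI : CompactSpace ↥pluckerQuadric :=
    isCompact_iff_compactSpace.mp OrbitSphere.plucker_compact
  haveI : CompactSpace (Quot orbitRel) := Quot.compactSpace
  let e : Quot orbitRel ≃ Metric.sphere (0 : EuclideanSpace ℝ (Fin 6)) 1 :=
    Equiv.ofBijective OrbitSphere.Fbar ⟨OrbitSphere.Fbar_inj, OrbitSphere.Fbar_surj⟩
  have hc : Continuous e := OrbitSphere.Fbar_cont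
  exact ⟨(Continuous.homeoOfEquivCompactToT2 (f := e) hc).toHomotopyEquiv⟩
end
end

section
/- Let H = {x ∈ ℝ³ : ‖x‖ < 1 and x₃ ≥ 0} be the open half–3-disk, let D = {x ∈ H : x₃ = 0} be its flat face, and let S² be the unit sphere of ℝ³. Then the quotient of H × S² by the equivalence relation (x, s) ≈ (x′, s′) ⇔ x = x′ and (s = s′ or x ∈ D), equipped with the quotient topology, is homeomorphic to the open unit ball of ℝ⁵. -/
/-- The open half–3-disk `H = {x ∈ ℝ³ : ‖x‖ < 1, x₃ ≥ 0}`. -/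
def halfDisk : Set (EuclideanSpace ℝ (Fin 3)) :=
  {x | ‖x‖ < 1 ∧ 0 ≤ x 2}

/-- The flat face `D = {x ∈ H : x₃ = 0}` of the half-disk. -/
def flatFace : Set (EuclideanSpace ℝ (Fin 3)) :=
  {x | x ∈ halfDisk ∧ x 2 = 0}

/-- The gluing relation on `H × S²`: `(x,s) ≈ (x′,s′)` iff `x = x′` and
(`s = s′` or `x ∈ D`); over each point of the flat face the whole sphere is collapsed. -/
def halfDiskGlueRel
    (p q : ↥halfDisk × ↥(Metric.sphere (0 : EuclideanSpace ℝ (Fin 3)) 1)) : Prop :=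
  p.1 = q.1 ∧ (p.2 = q.2 ∨ (p.1 : EuclideanSpace ℝ (Fin 3)) ∈ flatFace)

noncomputable section
namespace HDG

abbrev E3 := EuclideanSpace ℝ (Fin 3)
abbrev E5 := EuclideanSpace ℝ (Fin 5)
abbrev Sph := Metric.sphere (0 : E3) 1
abbrev B5 := Metric.ball (0 : E5) 1

lemma norm3_sq (x : E3) : ‖x‖ ^ 2 = (x 0) ^ 2 + (x 1) ^ 2 + (x 2) ^ 2 := by
  rw [EuclideanSpace.norm_eq, Real.sq_sqrt (by positivity)]
  simp [Fin.sum_univ_three, Real.norm_eq_abs, sq_abs]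

lemma norm5_sq (y : E5) :
    ‖y‖ ^ 2 = (y 0) ^ 2 + (y 1) ^ 2 + (y 2) ^ 2 + (y 3) ^ 2 + (y 4) ^ 2 := by
  rw [EuclideanSpace.norm_eq, Real.sq_sqrt (by positivity)]
  simp [Fin.sum_univ_five, Real.norm_eq_abs, sq_abs]

def F (p : E3 × E3) : E5 :=
  (WithLp.equiv 2 (Fin 5 → ℝ)).symm
    ![p.1 0, p.1 1, p.1 2 * p.2 0, p.1 2 * p.2 1, p.1 2 * p.2 2]

lemma F_apply (p : E3 × E3) (i : Fin 5) :
    F p i = ![p.1 0, p.1 1, p.1 2 * p.2 0, p.1 2 * p.2 1, p.1 2 * p.2 2] i := by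
  rw [F, WithLp.equiv_symm_apply, PiLp.toLp_apply]

lemma contF : Continuous F := by
  refine (PiLp.continuous_toLp 2 fun _ => ℝ).comp ?_
  refine continuous_pi fun i => ?_
  fin_cases i <;> simp <;> fun_prop

lemma sphere_sq {s : E3} (hs : ‖s‖ = 1) : (s 0) ^ 2 + (s 1) ^ 2 + (s 2) ^ 2 = 1 := by
  have := norm3_sq s; rw [hs] at this; linarith

lemma norm_F (x s : E3) (hs : ‖s‖ = 1) : ‖F (x, s)‖ = ‖x‖ := by
  have hs2 := sphere_sq hs
  have h : ‖F (x, s)‖ ^ 2 = ‖x‖ ^ 2 := by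
    rw [norm5_sq, norm3_sq]
    simp only [F_apply]
    simp only [Matrix.cons_val_zero, Matrix.cons_val_one, Matrix.head_cons,
      Matrix.cons_val_two, Matrix.tail_cons, Matrix.cons_val_three, Matrix.cons_val_four]
    nlinarith [hs2]
  calc ‖F (x, s)‖ = √(‖F (x, s)‖ ^ 2) := (Real.sqrt_sq (norm_nonneg _)).symm
    _ = √(‖x‖ ^ 2) := by rw [h]
    _ = ‖x‖ := Real.sqrt_sq (norm_nonneg _)

def r (y : E5) : ℝ := √((y 2) ^ 2 + (y 3) ^ 2 + (y 4) ^ 2)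

lemma r_nonneg (y : E5) : 0 ≤ r y := Real.sqrt_nonneg _

lemma r_sq (y : E5) : (r y) ^ 2 = (y 2) ^ 2 + (y 3) ^ 2 + (y 4) ^ 2 :=
  Real.sq_sqrt (by positivity)

lemma contr : Continuous r := by
  apply Real.continuous_sqrt.comp
  have h2 := (EuclideanSpace.proj (2 : Fin 5) : E5 →L[ℝ] ℝ).continuous
  have h3 := (EuclideanSpace.proj (3 : Fin 5) : E5 →L[ℝ] ℝ).continuous
  have h4 := (EuclideanSpace.proj (4 : Fin 5) : E5 →L[ℝ] ℝ).continuous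
  fun_prop

def X (y : E5) : E3 := (WithLp.equiv 2 (Fin 3 → ℝ)).symm ![y 0, y 1, r y]

lemma X_apply (y : E5) (i : Fin 3) : X y i = ![y 0, y 1, r y] i := by
  rw [X, WithLp.equiv_symm_apply, PiLp.toLp_apply]

lemma contX : Continuous X := by
  refine (PiLp.continuous_toLp 2 fun _ => ℝ).comp ?_
  refine continuous_pi fun i => ?_
  have := contr
  fin_cases i <;> simp [X] <;> fun_prop

lemma norm_X (y : E5) : ‖X y‖ = ‖y‖ := by
  have h : ‖X y‖ ^ 2 = ‖y‖ ^ 2 := by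
    rw [norm3_sq, norm5_sq]
    simp only [X_apply, Matrix.cons_val_zero, Matrix.cons_val_one, Matrix.head_cons,
      Matrix.cons_val_two, Matrix.tail_cons]
    rw [r_sq]; ring
  calc ‖X y‖ = √(‖X y‖ ^ 2) := (Real.sqrt_sq (norm_nonneg _)).symm
    _ = ‖y‖ := by rw [h]; exact Real.sqrt_sq (norm_nonneg _)

def S (y : E5) : E3 :=
  if r y = 0 then EuclideanSpace.single 0 1
  else (WithLp.equiv 2 (Fin 3 → ℝ)).symm ![y 2 / r y, y 3 / r y, y 4 / r y]

lemma norm_S (y : E5) : ‖S y‖ = 1 := by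
  rw [S]
  split_ifs with h
  · rw [EuclideanSpace.norm_single]; norm_num
  · have hr2 : (r y) ^ 2 ≠ 0 := pow_ne_zero _ h
    have hsq : ‖(WithLp.equiv 2 (Fin 3 → ℝ)).symm ![y 2 / r y, y 3 / r y, y 4 / r y]‖ ^ 2 = 1 := by
      rw [norm3_sq]
      simp only [WithLp.equiv_symm_apply, PiLp.toLp_apply, Matrix.cons_val_zero, Matrix.cons_val_one,
        Matrix.head_cons, Matrix.cons_val_two, Matrix.tail_cons]
      field_simp
      rw [← r_sq]
    nlinarith [norm_nonneg ((WithLp.equiv 2 (Fin 3 → ℝ)).symm ![y 2 / r y, y 3 / r y, y 4 / r y])]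

lemma S_apply_of_ne (y : E5) (h : r y ≠ 0) (i : Fin 3) :
    S y i = ![y 2 / r y, y 3 / r y, y 4 / r y] i := by
  rw [S, if_neg h, WithLp.equiv_symm_apply, PiLp.toLp_apply]

lemma r_eq_zero_iff (y : E5) : r y = 0 ↔ y 2 = 0 ∧ y 3 = 0 ∧ y 4 = 0 := by
  rw [r, Real.sqrt_eq_zero (by positivity)]
  constructor
  · intro h
    refine ⟨?_, ?_, ?_⟩ <;> nlinarith [sq_nonneg (y 2), sq_nonneg (y 3), sq_nonneg (y 4)]
  · rintro ⟨h2, h3, h4⟩; rw [h2, h3, h4]; ring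

/-- The descended forward map on subtypes. -/
def F' (p : ↥halfDisk × ↥Sph) : ↥B5 :=
  ⟨F ((p.1 : E3), (p.2 : E3)), by
    rw [Metric.mem_ball, dist_zero_right,
      norm_F _ _ (mem_sphere_zero_iff_norm.mp p.2.2)]
    exact p.1.2.1⟩

lemma contF' : Continuous F' := by
  apply Continuous.subtype_mk
  exact contF.comp (by fun_prop)

lemma Fresp : ∀ p q, halfDiskGlueRel p q → F' p = F' q := by
  rintro p q ⟨h1, h2⟩
  apply Subtype.ext
  rcases h2 with h2 | h2
  · show F _ = F _
    rw [h1, h2]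
  · have hxx : (p.1 : E3) = (q.1 : E3) := congrArg Subtype.val h1
    have hp2 : (p.1 : E3) 2 = 0 := h2.2
    have hq2 : (q.1 : E3) 2 = 0 := by rw [← hxx]; exact hp2
    show F _ = F _
    ext i
    rw [F_apply, F_apply]
    fin_cases i <;> simp [hxx, hp2, hq2]

def fbar : Quot halfDiskGlueRel → ↥B5 := Quot.lift F' Fresp

lemma contfbar : Continuous fbar :=
  isQuotientMap_quot_mk.continuous_iff.mpr contF'

lemma Xmem (y : ↥B5) : X (y : E5) ∈ halfDisk := by
  constructor
  · rw [norm_X]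
    have := y.2
    rwa [Metric.mem_ball, dist_zero_right] at this
  · show X (y : E5) 2 ≥ 0
    rw [X_apply]
    exact r_nonneg _

def G (y : ↥B5) : ↥halfDisk × ↥Sph :=
  (⟨X (y : E5), Xmem y⟩, ⟨S (y : E5), mem_sphere_zero_iff_norm.mpr (norm_S _)⟩)

def g (y : ↥B5) : Quot halfDiskGlueRel := Quot.mk _ (G y)

lemma contG1 : Continuous (fun y : ↥B5 => (G y).1) :=
  Continuous.subtype_mk (contX.comp continuous_subtype_val) _

lemma right_inv : ∀ y : ↥B5, fbar (g y) = y := by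
  intro y
  apply Subtype.ext
  show F ((X (y : E5)), (S (y : E5))) = (y : E5)
  by_cases h : r (y : E5) = 0
  · obtain ⟨h2, h3, h4⟩ := (r_eq_zero_iff _).mp h
    ext i
    rw [F_apply]
    fin_cases i <;> simp [X_apply, h, h2, h3, h4]
  · ext i
    rw [F_apply]
    fin_cases i <;>
      simp [X_apply, S_apply_of_ne _ h] <;>
      field_simp

lemma r_F (x s : E3) (hs : ‖s‖ = 1) (hx : 0 ≤ x 2) : r (F (x, s)) = x 2 := by
  have hs2 := sphere_sq hs
  rw [r]
  simp only [F_apply, Matrix.cons_val_zero, Matrix.cons_val_one, Matrix.head_cons,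
    Matrix.cons_val_two, Matrix.tail_cons, Matrix.cons_val_three, Matrix.cons_val_four]
  have : (x 2 * s 0) ^ 2 + (x 2 * s 1) ^ 2 + (x 2 * s 2) ^ 2 = (x 2) ^ 2 := by nlinarith
  rw [this, Real.sqrt_sq hx]

lemma X_F (x s : E3) (hs : ‖s‖ = 1) (hx : 0 ≤ x 2) : X (F (x, s)) = x := by
  ext i
  rw [X_apply]
  fin_cases i <;> simp [F_apply, r_F x s hs hx]

lemma S_F (x s : E3) (hs : ‖s‖ = 1) (hx : 0 ≤ x 2) (hne : x 2 ≠ 0) : S (F (x, s)) = s := by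
  have hr : r (F (x, s)) = x 2 := r_F x s hs hx
  have hrne : r (F (x, s)) ≠ 0 := by rw [hr]; exact hne
  ext i
  rw [S_apply_of_ne _ hrne]
  fin_cases i <;> simp [F_apply, hr] <;> field_simp

lemma left_inv : ∀ p, g (fbar (Quot.mk halfDiskGlueRel p)) = Quot.mk halfDiskGlueRel p := by
  rintro ⟨⟨x, hx⟩, ⟨s, hs⟩⟩
  have hs1 : ‖s‖ = 1 := mem_sphere_zero_iff_norm.mp hs
  show Quot.mk _ (G (F' _)) = _
  by_cases h : x 2 = 0
  · apply Quot.sound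
    refine ⟨Subtype.ext ?_, Or.inr ?_⟩
    · exact X_F x s hs1 hx.2
    · show ((G (F' (⟨x, hx⟩, ⟨s, hs⟩))).1 : E3) ∈ flatFace
      refine ⟨(G _).1.2, ?_⟩
      show X _ 2 = 0
      rw [X_apply]
      show r (F (x, s)) = 0
      rw [r_F x s hs1 hx.2]
      exact h
  · have hG : G (F' (⟨x, hx⟩, ⟨s, hs⟩)) = (⟨x, hx⟩, ⟨s, hs⟩) := by
      refine Prod.ext (Subtype.ext ?_) (Subtype.ext ?_)
      · exact X_F x s hs1 hx.2
      · exact S_F x s hs1 hx.2 h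
    rw [hG]

lemma contg : Continuous g := by
  rw [continuous_iff_continuousAt]
  intro y
  by_cases h : r (y : E5) = 0
  · rw [ContinuousAt, Filter.tendsto_def]
    intro A hA
    obtain ⟨U, hUA, hUopen, hgyU⟩ := mem_nhds_iff.mp hA
    set W := Quot.mk halfDiskGlueRel ⁻¹' U with hWdef
    have hWopen : IsOpen W := hUopen.preimage continuous_quot_mk
    have hXface : (X (y : E5)) ∈ flatFace := by
      refine ⟨Xmem y, ?_⟩
      show X (y : E5) 2 = 0
      rw [X_apply]
      exact h
    have hsub : ({(G y).1} ×ˢ (Set.univ : Set ↥Sph)) ⊆ W := by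
      rintro ⟨a, b⟩ ⟨ha, -⟩
      simp only [Set.mem_singleton_iff] at ha
      subst ha
      show Quot.mk halfDiskGlueRel ((G y).1, b) ∈ U
      have heq : Quot.mk halfDiskGlueRel ((G y).1, b) = Quot.mk halfDiskGlueRel (G y) :=
        Quot.sound ⟨rfl, Or.inr hXface⟩
      rw [heq]
      exact hgyU
    obtain ⟨u, v, hu, hv, hau, hv2, huv⟩ :=
      generalized_tube_lemma isCompact_singleton isCompact_univ hWopen hsub
    have hmem : (fun y' : ↥B5 => (G y').1) ⁻¹' u ∈ nhds y :=
      contG1.continuousAt.preimage_mem_nhds (hu.mem_nhds (hau rfl))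
    refine Filter.mem_of_superset hmem ?_
    intro y' hy'
    have : G y' ∈ W := huv ⟨hy', hv2 (Set.mem_univ _)⟩
    exact hUA this
  · show ContinuousAt (fun y' => Quot.mk halfDiskGlueRel (G y')) y
    refine (continuous_quot_mk.continuousAt).comp ?_
    refine ContinuousAt.prodMk contG1.continuousAt ?_
    rw [Topology.IsInducing.subtypeVal.continuousAt_iff]
    show ContinuousAt (fun y' : ↥B5 => S (y' : E5)) y
    have hopen : IsOpen {y' : ↥B5 | r (y' : E5) ≠ 0} :=
      (isOpen_compl_singleton.preimage (contr.comp continuous_subtype_val))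
    have hC : ContinuousAt (fun y' : ↥B5 =>
        (WithLp.equiv 2 (Fin 3 → ℝ)).symm
          ![(y' : E5) 2 / r (y' : E5), (y' : E5) 3 / r (y' : E5),
            (y' : E5) 4 / r (y' : E5)]) y := by
      refine ((PiLp.continuous_toLp 2 fun _ => ℝ).continuousAt).comp ?_
      rw [continuousAt_pi]
      intro i
      have h2 := (EuclideanSpace.proj (2 : Fin 5) : E5 →L[ℝ] ℝ).continuous
      have h3 := (EuclideanSpace.proj (3 : Fin 5) : E5 →L[ℝ] ℝ).continuous
      have h4 := (EuclideanSpace.proj (4 : Fin 5) : E5 →L[ℝ] ℝ).continuous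
      have hrc : ContinuousAt (fun y' : ↥B5 => r (y' : E5)) y :=
        (contr.comp continuous_subtype_val).continuousAt
      fin_cases i <;> simp <;>
        [exact ((h2.comp continuous_subtype_val).continuousAt).div hrc h;
         exact ((h3.comp continuous_subtype_val).continuousAt).div hrc h;
         exact ((h4.comp continuous_subtype_val).continuousAt).div hrc h]
    refine hC.congr ?_
    filter_upwards [hopen.mem_nhds h] with y' hy'
    rw [S, if_neg hy']

end HDG
end

open HDG in
/-- the quotient of `H × S²` collapsing the sphere factor over the flat face
is homeomorphic to the open unit ball of `ℝ⁵`. -/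
theorem halfDisk_glued_sphere_homeomorph_ball :
    Nonempty (Quot halfDiskGlueRel ≃ₜ Metric.ball (0 : EuclideanSpace ℝ (Fin 5)) 1) := by
  exact ⟨{ toFun := fbar, invFun := g,
           left_inv := fun q => Quot.inductionOn q left_inv,
           right_inv := right_inv,
           continuous_toFun := contfbar,
           continuous_invFun := contg }⟩
end
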